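/- arXiv:2403.09938 — 2 statements merged into one kernel-verified Lean document; each statement's English description precedes it below -/
import Mathlib

section
/- The maps row : M^row_{m,n} → W_m and col : M^col_{m,n} → W_n, defined on vertices by M ↦ row(M) and M ↦ col(M) respectively, are local isomorphisms of pre-crystal graphs. -/
namespace FilteredRSK

/-! ## Words and crystal operators (via parenthesis matching) -/

/-- Scan the word `w`, treating each letter `i` as a `)` and each letter `i+1` as a `(`,
matching parentheses in the usual way.  Returns the pair consisting of the list of positions
of unmatched `)` (rightmost first) and the stack of positions of unmatched `(`
(most recent first, so the leftmost unmatched `(` is the last entry). -/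
def bracketScan (i : ℕ) (w : List ℕ) : List ℕ × List ℕ :=
  ((List.range w.length).zip w).foldl
    (fun (st : List ℕ × List ℕ) (p : ℕ × ℕ) =>
      if p.2 = i + 1 then (st.1, p.1 :: st.2)
      else if p.2 = i then
        match st.2 with
        | [] => (p.1 :: st.1, [])
        | _ :: rest => (st.1, rest)
      else st)
    ([], [])

/-- Position of the rightmost unmatched `)` of `bracket_i(w)`, if any. -/
def fPos (i : ℕ) (w : List ℕ) : Option ℕ := (bracketScan i w).1.head?

/-- Position of the leftmost unmatched `(` of `bracket_i(w)`, if any. -/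
def ePos (i : ℕ) (w : List ℕ) : Option ℕ := (bracketScan i w).2.getLast?

/-- The crystal lowering operator `f_i`: change the letter `i` at the rightmost unmatched `)`
to `i+1`; output `∅` (i.e. `none`) if there is no unmatched `)`. -/
def fWord (i : ℕ) (w : List ℕ) : Option (List ℕ) := (fPos i w).map fun p => w.set p (i + 1)

/-- The crystal raising operator `e_i`: change the letter `i+1` at the leftmost unmatched `(`
to `i`; output `∅` (i.e. `none`) if there is no unmatched `(`. -/
def eWord (i : ℕ) (w : List ℕ) : Option (List ℕ) := (ePos i w).map fun p => w.set p i

/-! ## Tableaux -/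

/-- A tableau is a list of rows (top to bottom).  Its column reading word reads each column
bottom-to-top, columns left to right. -/
def readingWord (T : List (List ℕ)) : List ℕ :=
  (List.range (T.headD []).length).flatMap fun j => (T.filterMap fun row => row[j]?).reverse

/-- Semistandardness: all rows nonempty, rows weakly increase, row lengths weakly decrease,
and columns strictly increase. -/
def IsSSYT (T : List (List ℕ)) : Prop :=
  (∀ row ∈ T, row ≠ []) ∧
  (∀ row ∈ T, row.Chain' (· ≤ ·)) ∧
  T.Chain' (fun row row' => row'.length ≤ row.length ∧
    ∀ j < row'.length, row.getD j 0 < row'.getD j 0)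

/-- All entries of the tableau `T` lie in the interval `[a, b]`. -/
def entriesIn (T : List (List ℕ)) (a b : ℕ) : Prop := ∀ row ∈ T, ∀ x ∈ row, a ≤ x ∧ x ≤ b

/-- The shape of a tableau: the list of its row lengths. -/
def shape (T : List (List ℕ)) : List ℕ := T.map List.length

/-- A partition: a weakly decreasing list of positive integers. -/
def IsPartition (lam : List ℕ) : Prop :=
  lam.Chain' (fun x y => y ≤ x) ∧ ∀ x ∈ lam, 0 < x

/-- Row insertion of `x` into a single row: replace the first entry strictly larger than `x`
(and bump it out), or append `x` at the end. -/
def insertRow (row : List ℕ) (x : ℕ) : List ℕ × Option ℕ :=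
  match row.findIdx? (fun y => decide (x < y)) with
  | none => (row ++ [x], none)
  | some k => (row.set k x, row[k]?)

/-- Row insertion of a letter into a tableau. -/
def insertTab : List (List ℕ) → ℕ → List (List ℕ)
  | [], x => [[x]]
  | row :: rest, x =>
    match insertRow row x with
    | (row', none) => row' :: rest
    | (row', some y) => row' :: insertTab rest y

/-- The insertion tableau of a word, obtained by successive row insertion of its letters. -/
def tabOf (w : List ℕ) : List (List ℕ) := w.foldl insertTab []

/-- The highest-weight tableau of shape `lam` with entries from `[a, b]`:
row `i` (0-indexed) is constantly filled with `a + i`. -/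
def highestTab (lam : List ℕ) (a : ℕ) : List (List ℕ) :=
  lam.mapIdx fun i len => List.replicate len (a + i)

/-! ## Knuth equivalence -/

/-- Elementary Knuth moves. -/
inductive KnuthStep : List ℕ → List ℕ → Prop
  | yzx (u v : List ℕ) (x y z : ℕ) (h1 : x < y) (h2 : y ≤ z) :
      KnuthStep (u ++ y :: z :: x :: v) (u ++ y :: x :: z :: v)
  | zxy (u v : List ℕ) (x y z : ℕ) (h1 : x ≤ y) (h2 : y < z) :
      KnuthStep (u ++ z :: x :: y :: v) (u ++ x :: z :: y :: v)

/-- Knuth equivalence: the equivalence relation generated by elementary Knuth moves. -/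
def KnuthEquiv : List ℕ → List ℕ → Prop := Relation.EqvGen KnuthStep

/-- The Knuth equivalence class of a word. -/
def KClass (w : List ℕ) : Set (List ℕ) := {v | KnuthEquiv w v}

open Classical in
/-- A representative of a (nonempty) set of words. -/
noncomputable def classRep (C : Set (List ℕ)) : List ℕ :=
  if h : C.Nonempty then h.some else []

/-- The weight of a Knuth class, defined via a representative. -/
noncomputable def classWt (C : Set (List ℕ)) : Multiset ℕ := ↑(classRep C)

/-- The insertion tableau of a Knuth class (as the reading word of the tableau),
defined via a representative. -/
noncomputable def classTab (C : Set (List ℕ)) : List ℕ := readingWord (tabOf (classRep C))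

/-! ## Pre-crystal graphs -/

/-- A pre-crystal graph: a directed graph with edge labels in `L` and
vertex weights in `W`, together with a distinguished set of vertices. -/
structure PCG (V : Type*) (L : Type*) (W : Type*) where
  verts : Set V
  wt : V → W
  E : L → V → V → Prop

namespace PCG

variable {V V' L L' W W' : Type*}

/-- Underlying undirected adjacency between vertices. -/
def Adj (G : PCG V L W) (u v : V) : Prop :=
  u ∈ G.verts ∧ v ∈ G.verts ∧ ∃ l, G.E l u v ∨ G.E l v u

/-- `u` and `v` lie in the same connected component. -/
def Reach (G : PCG V L W) : V → V → Prop := Relation.ReflTransGen G.Adj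

/-- The connected component of `v` in `G`, as a pre-crystal graph. -/
def comp (G : PCG V L W) (v : V) : PCG V L W where
  verts := {u | u ∈ G.verts ∧ G.Reach v u}
  wt := G.wt
  E := G.E

/-- A pre-crystal graph homomorphism (with weights translated along `ω`):
a vertex map preserving weights and labelled edges. -/
def IsHomVia (G : PCG V L W) (H : PCG V' L W') (ω : W → W') (f : V → V') : Prop :=
  (∀ v ∈ G.verts, f v ∈ H.verts) ∧
  (∀ v ∈ G.verts, H.wt (f v) = ω (G.wt v)) ∧
  (∀ (l : L), ∀ u ∈ G.verts, ∀ v ∈ G.verts, G.E l u v → H.E l (f u) (f v))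

/-- A local isomorphism of pre-crystal graphs: a homomorphism whose restriction to each
connected component of `G` is an isomorphism onto a connected component of `H`. -/
def IsLocalIsoVia (G : PCG V L W) (H : PCG V' L W') (ω : W → W') (f : V → V') : Prop :=
  IsHomVia G H ω f ∧
  (∀ u ∈ G.verts, ∀ v ∈ G.verts, G.Reach u v → f u = f v → u = v) ∧
  (∀ u ∈ G.verts, ∀ v' ∈ H.verts, H.Reach (f u) v' → ∃ v ∈ G.verts, G.Reach u v ∧ f v = v') ∧
  (∀ (l : L), ∀ u ∈ G.verts, ∀ v ∈ G.verts, G.Reach u v → H.E l (f u) (f v) → G.E l u v)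

/-- An isomorphism of pre-crystal graphs. -/
def IsIsoVia (G : PCG V L W) (H : PCG V' L W') (ω : W → W') (f : V → V') : Prop :=
  IsHomVia G H ω f ∧ Set.BijOn f G.verts H.verts ∧
  (∀ (l : L), ∀ u ∈ G.verts, ∀ v ∈ G.verts, H.E l (f u) (f v) → G.E l u v)

/-- Two pre-crystal graphs are isomorphic (with weights identified along `ω`). -/
def IsomorphicVia (G : PCG V L W) (H : PCG V' L W') (ω : W → W') : Prop :=
  ∃ f, IsIsoVia G H ω f

/-- The Cartesian product of two pre-crystal graphs; edge labels form the disjoint union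
of the two label sets, and weights are concatenated. -/
def prod (G : PCG V L W) (H : PCG V' L' W') : PCG (V × V') (L ⊕ L') (W × W') where
  verts := {p | p.1 ∈ G.verts ∧ p.2 ∈ H.verts}
  wt := fun p => (G.wt p.1, H.wt p.2)
  E := fun l p q =>
    match l with
    | Sum.inl a => G.E a p.1 q.1 ∧ p.2 = q.2
    | Sum.inr b => H.E b p.2 q.2 ∧ p.1 = q.1

/-- The Cartesian product of a finite family of pre-crystal graphs sharing a common ambient
label set (with disjoint effective labels, as for crystals of words on disjoint intervals):
an edge labelled `l` acts in a single coordinate and fixes all others. -/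
def pi {r : ℕ} (G : Fin r → PCG V L W) : PCG (Fin r → V) L (Fin r → W) where
  verts := {p | ∀ k, p k ∈ (G k).verts}
  wt := fun p k => (G k).wt (p k)
  E := fun l p q => ∃ k, (G k).E l (p k) (q k) ∧ ∀ k', k' ≠ k → p k' = q k'

end PCG

/-! ## Word, tableau and Knuth crystal graphs -/

/-- The word crystal graph `W_{[a,b]}`: vertices are the words on the alphabet `[a,b]`,
the weight of a word is its multiset of letters (recording the number of occurrences of
each letter), and there is an edge `w →ᵢ v` iff `v = f_i(w)` (for `a ≤ i < b`). -/
def WordGraph (a b : ℕ) : PCG (List ℕ) ℕ (Multiset ℕ) where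
  verts := {w | ∀ x ∈ w, a ≤ x ∧ x ≤ b}
  wt := fun w => ↑w
  E := fun i u v => a ≤ i ∧ i < b ∧ fWord i u = some v

/-- The disjoint union `⊕_λ B_{λ,[a,b]}` of all tableau crystal graphs with entries in
`[a,b]`: the induced subgraph of `W_{[a,b]}` on reading words of semistandard tableaux. -/
def TabWordGraph (a b : ℕ) : PCG (List ℕ) ℕ (Multiset ℕ) where
  verts := {w | ∃ T, IsSSYT T ∧ entriesIn T a b ∧ readingWord T = w}
  wt := fun w => ↑w
  E := fun i u v => a ≤ i ∧ i < b ∧ fWord i u = some v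

/-- The tableau crystal graph `B_{λ,[a,b]}`: the induced subgraph of `W_{[a,b]}` on the
reading words of semistandard tableaux of shape `λ` with entries in `[a,b]`. -/
def BGraph (lam : List ℕ) (a b : ℕ) : PCG (List ℕ) ℕ (Multiset ℕ) where
  verts := {w | ∃ T, IsSSYT T ∧ shape T = lam ∧ entriesIn T a b ∧ readingWord T = w}
  wt := fun w => ↑w
  E := fun i u v => a ≤ i ∧ i < b ∧ fWord i u = some v

/-- The Knuth crystal graph `K_{[a,b]}`: vertices are Knuth equivalence classes of words on
`[a,b]`, weights via representatives, with an edge `C →ᵢ C'` iff some representatives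
`w ∈ C`, `w' ∈ C'` satisfy `w' = f_i(w)`. -/
noncomputable def KnuthGraph (a b : ℕ) : PCG (Set (List ℕ)) ℕ (Multiset ℕ) where
  verts := {C | ∃ w, (∀ x ∈ w, a ≤ x ∧ x ≤ b) ∧ C = KClass w}
  wt := classWt
  E := fun i C C' => ∃ w ∈ C, ∃ w' ∈ C', a ≤ i ∧ i < b ∧ fWord i w = some w'

/-! ## Filtrations -/

/-- `ι` enumerates a filtration `0 = i₀ < i₁ < ⋯ < i_r = m` of `[0, m]`. -/
def IsFiltration (m : ℕ) {r : ℕ} (ι : Fin (r + 1) → ℕ) : Prop :=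
  StrictMono ι ∧ ι 0 = 0 ∧ ι (Fin.last r) = m

/-- The subword of `w` consisting of all letters in the interval `[lo + 1, hi]`. -/
def blockFilter (lo hi : ℕ) (w : List ℕ) : List ℕ :=
  w.filter fun x => decide (lo + 1 ≤ x ∧ x ≤ hi)

/-- The `I`-filtration of a word: the tuple of subwords on the letter intervals
`[i_{k-1}+1, i_k]`. -/
def filterWord {r : ℕ} (ι : Fin (r + 1) → ℕ) (w : List ℕ) : Fin r → List ℕ :=
  fun k => blockFilter (ι k.castSucc) (ι k.succ) w

/-- The canonical splitting of a weight (a multiset of letters) along the intervals of a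
filtration. -/
def splitWt {r : ℕ} (ι : Fin (r + 1) → ℕ) (s : Multiset ℕ) : Fin r → Multiset ℕ :=
  fun k => s.filter fun x => ι k.castSucc + 1 ≤ x ∧ x ≤ ι k.succ

/-- The `I`-filtered word crystal graph `W^I_m`: the subgraph of `W_m = W_{[1,m]}` obtained
by deleting all edges labelled by elements of `I`. -/
def FilteredWordGraph (m : ℕ) (I : Set ℕ) : PCG (List ℕ) ℕ (Multiset ℕ) where
  verts := {w | ∀ x ∈ w, 1 ≤ x ∧ x ≤ m}
  wt := fun w => ↑w
  E := fun i u v => i ∉ I ∧ 1 ≤ i ∧ i < m ∧ fWord i u = some v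

/-- The `I`-filtered Knuth crystal graph `K^I_m`: the quotient of `W^I_m` by Knuth
equivalence. -/
noncomputable def FilteredKnuthGraph (m : ℕ) (I : Set ℕ) :
    PCG (Set (List ℕ)) ℕ (Multiset ℕ) where
  verts := {C | ∃ w, (∀ x ∈ w, 1 ≤ x ∧ x ≤ m) ∧ C = KClass w}
  wt := classWt
  E := fun i C C' => i ∉ I ∧ ∃ w ∈ C, ∃ w' ∈ C', 1 ≤ i ∧ i < m ∧ fWord i w = some w'

/-- The product `W_{[1,i₁]} □ W_{[i₁+1,i₂]} □ ⋯ □ W_{[i_{r-1}+1,m]}`. -/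
def WordPiGraph {r : ℕ} (ι : Fin (r + 1) → ℕ) :
    PCG (Fin r → List ℕ) ℕ (Fin r → Multiset ℕ) :=
  PCG.pi fun k => WordGraph (ι k.castSucc + 1) (ι k.succ)

/-- The product `K_{[1,i₁]} □ K_{[i₁+1,i₂]} □ ⋯ □ K_{[i_{r-1}+1,m]}`. -/
noncomputable def KnuthPiGraph {r : ℕ} (ι : Fin (r + 1) → ℕ) :
    PCG (Fin r → Set (List ℕ)) ℕ (Fin r → Multiset ℕ) :=
  PCG.pi fun k => KnuthGraph (ι k.castSucc + 1) (ι k.succ)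

/-- The disjoint union, over all `I`-filtered partition-tuples `λ`, of the filtered tableau
crystal graphs `B_{λ,m} = B_{λ⁽¹⁾,[1,i₁]} □ ⋯ □ B_{λ⁽ʳ⁾,[i_{r-1}+1,m]}`. -/
def TabPiGraph {r : ℕ} (ι : Fin (r + 1) → ℕ) :
    PCG (Fin r → List ℕ) ℕ (Fin r → Multiset ℕ) :=
  PCG.pi fun k => TabWordGraph (ι k.castSucc + 1) (ι k.succ)

/-- The `I`-filtered tableau crystal graph `B_{λ,m}` of shape-tuple `λ`. -/
def BPiGraph {r : ℕ} (ι : Fin (r + 1) → ℕ) (lam : Fin r → List ℕ) :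
    PCG (Fin r → List ℕ) ℕ (Fin r → Multiset ℕ) :=
  PCG.pi fun k => BGraph (lam k) (ι k.castSucc + 1) (ι k.succ)

/-- The map on Knuth classes induced by the `I`-filtration (via a representative). -/
noncomputable def classFilter {r : ℕ} (ι : Fin (r + 1) → ℕ) (C : Set (List ℕ)) :
    Fin r → Set (List ℕ) :=
  fun k => KClass (filterWord ι (classRep C) k)

/-- An `I`-filtered partition-tuple: each `λ⁽ᵏ⁾` is a partition with at most
`i_k - i_{k-1}` rows. -/
def IsFilteredShape {r : ℕ} (ι : Fin (r + 1) → ℕ) (lam : Fin r → List ℕ) : Prop :=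
  ∀ k, IsPartition (lam k) ∧ (lam k).length ≤ ι k.succ - ι k.castSucc

/-- The highest-weight tableau-tuple of shape-tuple `λ`: its `k`-th component is the
highest-weight tableau of shape `λ⁽ᵏ⁾` with entries from `[i_{k-1}+1, i_k]`. -/
def highestTabs {r : ℕ} (ι : Fin (r + 1) → ℕ) (lam : Fin r → List ℕ) :
    Fin r → List (List ℕ) :=
  fun k => highestTab (lam k) (ι k.castSucc + 1)

/-! ## Matrices, row/column words and bicrystal operators -/

/-- The row word of a nonnegative integer matrix: record `M i j` copies of the (1-based) row
index `i + 1` for each entry, reading columns top-to-bottom, left to right. -/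
def rowWord {m n : ℕ} (M : Matrix (Fin m) (Fin n) ℕ) : List ℕ :=
  (List.finRange n).flatMap fun j => (List.finRange m).flatMap fun i =>
    List.replicate (M i j) ((i : ℕ) + 1)

/-- The column word: record `M i j` copies of the (1-based) column index `j + 1` for each
entry, reading rows left-to-right, top to bottom. -/
def colWord {m n : ℕ} (M : Matrix (Fin m) (Fin n) ℕ) : List ℕ :=
  (List.finRange m).flatMap fun i => (List.finRange n).flatMap fun j =>
    List.replicate (M i j) ((j : ℕ) + 1)

/-- The list of matrix cells producing the successive letters of `rowWord M`. -/
def rowCells {m n : ℕ} (M : Matrix (Fin m) (Fin n) ℕ) : List (Fin m × Fin n) :=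
  (List.finRange n).flatMap fun j => (List.finRange m).flatMap fun i =>
    List.replicate (M i j) (i, j)

/-- The list of matrix cells producing the successive letters of `colWord M`. -/
def colCells {m n : ℕ} (M : Matrix (Fin m) (Fin n) ℕ) : List (Fin m × Fin n) :=
  (List.finRange m).flatMap fun i => (List.finRange n).flatMap fun j =>
    List.replicate (M i j) (i, j)

/-- Subtract `1` at the cell `c` and add `1` at the cell directly below. -/
def shiftDown {m n : ℕ} (M : Matrix (Fin m) (Fin n) ℕ) (c : Fin m × Fin n) :
    Matrix (Fin m) (Fin n) ℕ := fun a b =>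
  if a = c.1 ∧ b = c.2 then M a b - 1
  else if (a : ℕ) = (c.1 : ℕ) + 1 ∧ b = c.2 then M a b + 1
  else M a b

/-- Subtract `1` at the cell `c` and add `1` at the cell directly above. -/
def shiftUp {m n : ℕ} (M : Matrix (Fin m) (Fin n) ℕ) (c : Fin m × Fin n) :
    Matrix (Fin m) (Fin n) ℕ := fun a b =>
  if a = c.1 ∧ b = c.2 then M a b - 1
  else if (a : ℕ) + 1 = (c.1 : ℕ) ∧ b = c.2 then M a b + 1
  else M a b

/-- Subtract `1` at the cell `c` and add `1` at the cell directly to the right. -/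
def shiftRight {m n : ℕ} (M : Matrix (Fin m) (Fin n) ℕ) (c : Fin m × Fin n) :
    Matrix (Fin m) (Fin n) ℕ := fun a b =>
  if a = c.1 ∧ b = c.2 then M a b - 1
  else if a = c.1 ∧ (b : ℕ) = (c.2 : ℕ) + 1 then M a b + 1
  else M a b

/-- Subtract `1` at the cell `c` and add `1` at the cell directly to the left. -/
def shiftLeft {m n : ℕ} (M : Matrix (Fin m) (Fin n) ℕ) (c : Fin m × Fin n) :
    Matrix (Fin m) (Fin n) ℕ := fun a b =>
  if a = c.1 ∧ b = c.2 then M a b - 1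
  else if a = c.1 ∧ (b : ℕ) + 1 = (c.2 : ℕ) then M a b + 1
  else M a b

/-- The row bicrystal lowering operator `f_i^row`, transporting `f_i` through `rowWord`. -/
def fRow {m n : ℕ} (i : ℕ) (M : Matrix (Fin m) (Fin n) ℕ) :
    Option (Matrix (Fin m) (Fin n) ℕ) :=
  (fPos i (rowWord M)).bind fun p => ((rowCells M)[p]?).map fun c => shiftDown M c

/-- The row bicrystal raising operator `e_i^row`, transporting `e_i` through `rowWord`. -/
def eRow {m n : ℕ} (i : ℕ) (M : Matrix (Fin m) (Fin n) ℕ) :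
    Option (Matrix (Fin m) (Fin n) ℕ) :=
  (ePos i (rowWord M)).bind fun p => ((rowCells M)[p]?).map fun c => shiftUp M c

/-- The column bicrystal lowering operator `f_j^col`, transporting `f_j` through `colWord`. -/
def fCol {m n : ℕ} (j : ℕ) (M : Matrix (Fin m) (Fin n) ℕ) :
    Option (Matrix (Fin m) (Fin n) ℕ) :=
  (fPos j (colWord M)).bind fun p => ((colCells M)[p]?).map fun c => shiftRight M c

/-- The column bicrystal raising operator `e_j^col`, transporting `e_j` through `colWord`. -/
def eCol {m n : ℕ} (j : ℕ) (M : Matrix (Fin m) (Fin n) ℕ) :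
    Option (Matrix (Fin m) (Fin n) ℕ) :=
  (ePos j (colWord M)).bind fun p => ((colCells M)[p]?).map fun c => shiftLeft M c

/-- The pre-crystal graph `M^row_{m,n}`: vertices are all matrices in `Mat_{m,n}(ℤ≥0)`,
weights are row-sums (the weight of the row word), edges `M →ᵢ f_i^row(M)`. -/
def MRowGraph (m n : ℕ) : PCG (Matrix (Fin m) (Fin n) ℕ) ℕ (Multiset ℕ) where
  verts := Set.univ
  wt := fun M => ↑(rowWord M)
  E := fun i M M' => 1 ≤ i ∧ i < m ∧ fRow i M = some M'

/-- The pre-crystal graph `M^col_{m,n}`. -/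
def MColGraph (m n : ℕ) : PCG (Matrix (Fin m) (Fin n) ℕ) ℕ (Multiset ℕ) where
  verts := Set.univ
  wt := fun M => ↑(colWord M)
  E := fun j M M' => 1 ≤ j ∧ j < n ∧ fCol j M = some M'

/-- The matrix bicrystal graph `M_{m,n}`, with edges labelled `i^row` (`Sum.inl i`) and
`j^col` (`Sum.inr j`), and weight the pair (row-sum tuple, column-sum tuple). -/
def MatGraph (m n : ℕ) :
    PCG (Matrix (Fin m) (Fin n) ℕ) (ℕ ⊕ ℕ) (Multiset ℕ × Multiset ℕ) where
  verts := Set.univ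
  wt := fun M => (↑(rowWord M), ↑(colWord M))
  E := fun l M M' =>
    match l with
    | Sum.inl i => 1 ≤ i ∧ i < m ∧ fRow i M = some M'
    | Sum.inr j => 1 ≤ j ∧ j < n ∧ fCol j M = some M'

/-- The `(I|J)`-filtered matrix bicrystal graph `M^{I|J}_{m,n}`: delete the edges labelled
`i^row` with `i ∈ I` and `j^col` with `j ∈ J`. -/
def FilteredMatGraph (m n : ℕ) (I J : Set ℕ) :
    PCG (Matrix (Fin m) (Fin n) ℕ) (ℕ ⊕ ℕ) (Multiset ℕ × Multiset ℕ) where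
  verts := Set.univ
  wt := fun M => (↑(rowWord M), ↑(colWord M))
  E := fun l M M' =>
    match l with
    | Sum.inl i => i ∉ I ∧ 1 ≤ i ∧ i < m ∧ fRow i M = some M'
    | Sum.inr j => j ∉ J ∧ 1 ≤ j ∧ j < n ∧ fCol j M = some M'

/-- `filterRSK_{I|J}` at the level of reading words: apply the insertion tableau map to each
component of the filtrations of the row and column words, recording reading words. -/
def filterRSKw {m n r s : ℕ} (ι : Fin (r + 1) → ℕ) (κ : Fin (s + 1) → ℕ)
    (M : Matrix (Fin m) (Fin n) ℕ) : (Fin r → List ℕ) × (Fin s → List ℕ) :=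
  (fun k => readingWord (tabOf (filterWord ι (rowWord M) k)),
   fun k => readingWord (tabOf (filterWord κ (colWord M) k)))

/-- `filterRSK_{I|J}` at the level of tableaux. -/
def filterRSKt {m n r s : ℕ} (ι : Fin (r + 1) → ℕ) (κ : Fin (s + 1) → ℕ)
    (M : Matrix (Fin m) (Fin n) ℕ) :
    (Fin r → List (List ℕ)) × (Fin s → List (List ℕ)) :=
  (fun k => tabOf (filterWord ι (rowWord M) k),
   fun k => tabOf (filterWord κ (colWord M) k))

/-- A matrix is a highest-weight vertex of `M^{I|J}_{m,n}`:
`e_i^row(M) = ∅` for all `i ∉ I` and `e_j^col(M) = ∅` for all `j ∉ J`. -/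
def MatHighest {m n : ℕ} (I J : Set ℕ) (M : Matrix (Fin m) (Fin n) ℕ) : Prop :=
  (∀ i, 1 ≤ i → i < m → i ∉ I → eRow i M = none) ∧
  (∀ j, 1 ≤ j → j < n → j ∉ J → eCol j M = none)

/-- A set of matrices is `(I|J)`-bicrystal closed if it is closed under the bicrystal
operators `e_i^row, f_i^row` (`i ∉ I`) and `e_j^col, f_j^col` (`j ∉ J`). -/
def BicrystalClosed {m n : ℕ} (I J : Set ℕ) (S : Set (Matrix (Fin m) (Fin n) ℕ)) : Prop :=
  ∀ M ∈ S,
    (∀ i, 1 ≤ i → i < m → i ∉ I →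
      (∀ N, fRow i M = some N → N ∈ S) ∧ (∀ N, eRow i M = some N → N ∈ S)) ∧
    (∀ j, 1 ≤ j → j < n → j ∉ J →
      (∀ N, fCol j M = some N → N ∈ S) ∧ (∀ N, eCol j M = some N → N ∈ S))

/-- The induced pre-crystal subgraph of `M^{I|J}_{m,n}` on a set `S` of matrices. -/
def inducedMatGraph (m n : ℕ) (I J : Set ℕ) (S : Set (Matrix (Fin m) (Fin n) ℕ)) :
    PCG (Matrix (Fin m) (Fin n) ℕ) (ℕ ⊕ ℕ) (Multiset ℕ × Multiset ℕ) where
  verts := S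
  wt := fun M => (↑(rowWord M), ↑(colWord M))
  E := (FilteredMatGraph m n I J).E

/-- The disjoint union, over the highest-weight matrices `M₀ ∈ S` (hence with multiplicity
`c_{λ|μ}` for each filtered partition-tuple `(λ|μ)`), of copies of `B_{λ,m} □ B_{μ,n}` where
`(λ|μ)` is the shape of `filterRSK_{I|J}(M₀)`. -/
def sumCopiesGraph {m n : ℕ} {r s : ℕ} (ι : Fin (r + 1) → ℕ) (κ : Fin (s + 1) → ℕ)
    (S : Set (Matrix (Fin m) (Fin n) ℕ)) :
    PCG (Matrix (Fin m) (Fin n) ℕ × ((Fin r → List ℕ) × (Fin s → List ℕ))) (ℕ ⊕ ℕ)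
      ((Fin r → Multiset ℕ) × (Fin s → Multiset ℕ)) where
  verts := {Mp | Mp.1 ∈ S ∧ MatHighest (Set.range ι) (Set.range κ) Mp.1 ∧
    ∃ lam mu, IsFilteredShape ι lam ∧ IsFilteredShape κ mu ∧
      filterRSKt ι κ Mp.1 = (highestTabs ι lam, highestTabs κ mu) ∧
      Mp.2 ∈ (PCG.prod (BPiGraph ι lam) (BPiGraph κ mu)).verts}
  wt := fun Mp => (PCG.prod (TabPiGraph ι) (TabPiGraph κ)).wt Mp.2
  E := fun l Mp Mq =>
    Mp.1 = Mq.1 ∧ (PCG.prod (TabPiGraph ι) (TabPiGraph κ)).E l Mp.2 Mq.2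

/-! ## 1-based matrix entries and shape vectors -/

/-- The `(i,j)` entry of `M` in 1-based coordinates, with the convention that entries outside
the matrix are `0`. -/
def ent {m n : ℕ} (M : Matrix (Fin m) (Fin n) ℕ) (i j : ℕ) : ℕ :=
  if h : 1 ≤ i ∧ i ≤ m ∧ 1 ≤ j ∧ j ≤ n then M ⟨i - 1, by omega⟩ ⟨j - 1, by omega⟩ else 0

/-- The partition `(lam (lo+1), lam (lo+2), …, lam (lo+size))` with trailing zero parts
removed: the shape of the block of a filtered partition-tuple written as an integer vector. -/
def blockShape (lam : ℕ → ℕ) (lo size : ℕ) : List ℕ :=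
  ((List.range size).map fun t => lam (lo + t + 1)).filter fun x => decide (0 < x)

/-- The highest-weight tableau-tuple of the filtered partition-tuple written as an integer
vector `lam : ℕ → ℕ` (1-based). -/
def highestFromVec {r : ℕ} (ι : Fin (r + 1) → ℕ) (lam : ℕ → ℕ) : Fin r → List (List ℕ) :=
  fun k => highestTab (blockShape lam (ι k.castSucc) (ι k.succ - ι k.castSucc))
    (ι k.castSucc + 1)

/-! ## Partial permutations and matrix Schubert combinatorics -/

/-- A partial permutation: at most one `1` in each row and column; encoded as an injective
partial function from rows to columns (`none` encodes `∞`). -/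
def IsPartialPerm {m n : ℕ} (w : Fin m → Option (Fin n)) : Prop :=
  ∀ a a' b, w a = some b → w a' = some b → a = a'

/-- The cell `(i, j)` lies in the Rothe diagram `D(w)`: it is not weakly below nor weakly
right of a dot of the partial permutation matrix. -/
def InD {m n : ℕ} (w : Fin m → Option (Fin n)) (i : Fin m) (j : Fin n) : Prop :=
  (∀ b, w i = some b → (j : ℕ) < (b : ℕ)) ∧ (∀ a, a ≤ i → w a ≠ some j)

/-- The row descent positions of `w` (1-based): rows `i` such that the rightmost box of
`D(w)` in row `i` is strictly right of the rightmost box in row `i + 1`. -/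
def DescRow {m n : ℕ} (w : Fin m → Option (Fin n)) : Set ℕ :=
  {i | ∃ (h1 : 1 ≤ i) (h2 : i < m), ∃ j : Fin n,
    InD w ⟨i - 1, by omega⟩ j ∧ ∀ j' : Fin n, InD w ⟨i, h2⟩ j' → (j' : ℕ) < (j : ℕ)}

/-- The column descent positions of `w` (1-based). -/
def DescCol {m n : ℕ} (w : Fin m → Option (Fin n)) : Set ℕ :=
  {j | ∃ (h1 : 1 ≤ j) (h2 : j < n), ∃ i : Fin m,
    InD w i ⟨j - 1, by omega⟩ ∧ ∀ i' : Fin m, InD w i' ⟨j, h2⟩ → (i' : ℕ) < (i : ℕ)}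

/-- The rank function `r_w(i,j)`: the rank of the northwest `i × j` submatrix of the partial
permutation matrix, i.e. the number of dots in that submatrix. -/
noncomputable def rankFn {m n : ℕ} (w : Fin m → Option (Fin n)) (i j : ℕ) : ℕ :=
  Set.ncard {a : Fin m | (a : ℕ) < i ∧ ∃ b : Fin n, w a = some b ∧ (b : ℕ) < j}

/-- The matrix Schubert variety `X_w ⊆ Mat_{m,n}(ℂ)`: matrices whose northwest `i × j`
submatrices have rank at most `r_w(i,j)`. -/
def XSchubert {m n : ℕ} (w : Fin m → Option (Fin n)) : Set (Matrix (Fin m) (Fin n) ℂ) :=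
  {A | ∀ (i : ℕ) (hi : i ≤ m) (j : ℕ) (hj : j ≤ n),
    (A.submatrix (Fin.castLE hi) (Fin.castLE hj)).rank ≤ rankFn w i j}

/-- `g` is block-diagonal with diagonal blocks of sizes `i₁ - i₀, …, i_r - i_{r-1}`. -/
def IsBlockDiag {m : ℕ} {r : ℕ} (ι : Fin (r + 1) → ℕ) (g : Matrix (Fin m) (Fin m) ℂ) :
    Prop :=
  ∀ a b : Fin m,
    (¬ ∃ k : Fin r, ι k.castSucc ≤ (a : ℕ) ∧ (a : ℕ) < ι k.succ ∧
        ι k.castSucc ≤ (b : ℕ) ∧ (b : ℕ) < ι k.succ) → g a b = 0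

/-- `(p, q)` (0-based) is a cell of the essential set `E(w)`. -/
def EssCell {m n : ℕ} (w : Fin m → Option (Fin n)) (p : Fin m) (q : Fin n) : Prop :=
  InD w p q ∧ (∀ hq : (q : ℕ) + 1 < n, ¬ InD w p ⟨(q : ℕ) + 1, hq⟩) ∧
    (∀ hp : (p : ℕ) + 1 < m, ¬ InD w ⟨(p : ℕ) + 1, hp⟩ q)

/-- `N` carries an antidiagonal of some Fulton generator of the Schubert determinantal ideal
of `w`: there are an essential cell `(p,q)`, `t = r_w(p,q) + 1` rows `r₁ < ⋯ < r_t ≤ p` and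
columns `c₁ < ⋯ < c_t ≤ q` with `N_{r_s, c_{t+1-s}} ≥ 1` for all `s`. -/
def CarriesAntidiag {m n : ℕ} (w : Fin m → Option (Fin n))
    (N : Matrix (Fin m) (Fin n) ℕ) : Prop :=
  ∃ (p : Fin m) (q : Fin n), EssCell w p q ∧
    ∃ (rr : Fin (rankFn w ((p : ℕ) + 1) ((q : ℕ) + 1) + 1) → Fin m)
      (cc : Fin (rankFn w ((p : ℕ) + 1) ((q : ℕ) + 1) + 1) → Fin n),
      StrictMono rr ∧ StrictMono cc ∧ (∀ t, rr t ≤ p) ∧ (∀ t, cc t ≤ q) ∧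
      ∀ t, 1 ≤ N (rr t) (cc t.rev)

/-- The scan step function. -/
def scanStep (i : ℕ) (st : List ℕ × List ℕ) (p : ℕ × ℕ) : List ℕ × List ℕ :=
  if p.2 = i + 1 then (st.1, p.1 :: st.2)
  else if p.2 = i then
    match st.2 with
    | [] => (p.1 :: st.1, [])
    | _ :: rest => (st.1, rest)
  else st

/-- The invariant maintained by the bracket scan after processing the first `t` letters. -/
def ScanInv (i : ℕ) (w : List ℕ) (t : ℕ) (st : List ℕ × List ℕ) : Prop :=
  (∀ p ∈ st.1, w[p]? = some i ∧ p < t) ∧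
  (∀ q ∈ st.2, w[q]? = some (i+1) ∧ q < t) ∧
  (∀ p, st.1.head? = some p → ∀ q ∈ st.2, p < q) ∧
  (∀ p, st.1.head? = some p → p + 1 = t ∨ w[p+1]? ≠ some i) ∧
  (∀ x, t = x + 1 → w[x]? = some (i+1) → st.2.head? = some x) ∧
  (∀ p, st.1.head? = some p → p = 0 ∨ w[p-1]? ≠ some (i+1))

lemma scanInv_step {i : ℕ} {w : List ℕ} {t : ℕ} {st : List ℕ × List ℕ} {x : ℕ}
    (h : ScanInv i w t st) (hx : w[t]? = some x) :
    ScanInv i w (t+1) (scanStep i st (t, x)) := by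
  obtain ⟨h1, h2, h3, h4, h6, h8⟩ := h
  by_cases hx1 : x = i + 1
  · have hstep : scanStep i st (t, x) = (st.1, t :: st.2) := by simp [scanStep, hx1]
    have hxt : w[t]? = some (i+1) := by rw [hx, hx1]
    rw [hstep]
    refine ⟨fun p hp => ⟨(h1 p hp).1, by have := (h1 p hp).2; omega⟩, ?_, ?_, ?_, ?_, h8⟩
    · intro q hq
      rcases List.mem_cons.mp hq with rfl | hq
      · exact ⟨hxt, by omega⟩
      · exact ⟨(h2 q hq).1, by have := (h2 q hq).2; omega⟩
    · rintro p hp q hq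
      simp only [List.mem_cons] at hq
      rcases hq with rfl | hq
      · exact (h1 p (List.mem_of_mem_head? hp)).2
      · exact h3 p hp q hq
    · intro p hp
      rcases h4 p hp with heq | hne
      · right; rw [← heq] at hxt; rw [hxt]; simp
      · right; exact hne
    · intro y hy _
      have : y = t := by omega
      subst this; rfl
  · by_cases hx2 : x = i
    · have hxt : w[t]? = some i := by rw [hx, hx2]
      rcases hst : st.2 with _ | ⟨q0, rest⟩
      · -- record: new unmatched `)` at position t
        have hstep : scanStep i st (t, x) = (t :: st.1, []) := by
          simp [scanStep, hx1, hx2, hst]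
        rw [hstep]
        refine ⟨?_, by simp, by simp, ?_, ?_, ?_⟩
        · intro p hp
          rcases List.mem_cons.mp hp with rfl | hp
          · exact ⟨hxt, by omega⟩
          · exact ⟨(h1 p hp).1, by have := (h1 p hp).2; omega⟩
        · rintro p hp
          simp only [List.head?_cons, Option.some.injEq] at hp
          subst hp
          left; rfl
        · intro y hy hw
          exfalso
          have : y = t := by omega
          subst this
          rw [hxt] at hw
          simp only [Option.some.injEq] at hw
          omega
        · rintro p hp
          simp only [List.head?_cons, Option.some.injEq] at hp
          subst hp
          rcases Nat.eq_zero_or_pos t with h0 | h0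
          · left; exact h0
          · right
            intro hcon
            have hp1 : t = (t - 1) + 1 := by omega
            have := h6 (t-1) hp1 hcon
            rw [hst] at this; simp at this
      · -- pop
        have hstep : scanStep i st (t, x) = (st.1, rest) := by
          simp [scanStep, hx1, hx2, hst]
        rw [hstep]
        refine ⟨fun p hp => ⟨(h1 p hp).1, by have := (h1 p hp).2; omega⟩, ?_, ?_, ?_, ?_, h8⟩
        · intro q hq
          have hq' : q ∈ st.2 := by rw [hst]; exact List.mem_cons_of_mem _ hq
          exact ⟨(h2 q hq').1, by have := (h2 q hq').2; omega⟩
        · intro p hp q hq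
          exact h3 p hp q (by rw [hst]; exact List.mem_cons_of_mem _ hq)
        · intro p hp
          rcases h4 p hp with heq | hne
          · exfalso
            have hq0 : q0 ∈ st.2 := by rw [hst]; exact List.mem_cons_self
            have h3' := h3 p hp q0 hq0
            have h2' := (h2 q0 hq0).2
            omega
          · right; exact hne
        · intro y hy hw
          exfalso
          have : y = t := by omega
          subst this
          rw [hxt] at hw
          simp only [Option.some.injEq] at hw
          omega
    · -- no-op
      have hstep : scanStep i st (t, x) = st := by simp [scanStep, hx1, hx2]
      rw [hstep]
      refine ⟨fun p hp => ⟨(h1 p hp).1, by have := (h1 p hp).2; omega⟩,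
        fun q hq => ⟨(h2 q hq).1, by have := (h2 q hq).2; omega⟩, h3, ?_, ?_, h8⟩
      · intro p hp
        rcases h4 p hp with heq | hne
        · right; rw [← heq] at hx; rw [hx]; simp [hx2]
        · right; exact hne
      · intro y hy hw
        exfalso
        have : y = t := by omega
        subst this
        rw [hx] at hw
        simp only [Option.some.injEq] at hw
        exact hx1 hw

lemma scanInv_foldl (i : ℕ) (w : List ℕ) :
    ∀ (l : List ℕ) (t : ℕ) (st : List ℕ × List ℕ), w.drop t = l → ScanInv i w t st →
      ScanInv i w (t + l.length) (((List.range' t l.length).zip l).foldl (scanStep i) st) := by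
  intro l
  induction l with
  | nil => intro t st _ h; simpa using h
  | cons x rest ih =>
    intro t st hdrop h
    have hx : w[t]? = some x := by
      have h0 : (w.drop t)[0]? = some x := by rw [hdrop]; simp
      rw [List.getElem?_drop] at h0
      simpa using h0
    have hdrop' : w.drop (t+1) = rest := by
      have := congrArg List.tail hdrop
      rwa [List.tail_drop] at this
    rw [List.length_cons, List.range'_succ, List.zip_cons_cons]
    simp only [List.foldl_cons, List.length_cons]
    have h2 := ih (t+1) (scanStep i st (t, x)) hdrop' (scanInv_step h hx)
    rw [show t + (rest.length + 1) = t + 1 + rest.length from by omega]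
    exact h2

lemma scanInv_bracketScan (i : ℕ) (w : List ℕ) :
    ScanInv i w w.length (bracketScan i w) := by
  have h0 : ScanInv i w 0 ([], []) := by
    refine ⟨by simp, by simp, by simp, by simp, ?_, by simp⟩
    intro x hx; omega
  have := scanInv_foldl i w w 0 ([], []) rfl h0
  rw [bracketScan, List.range_eq_range']
  simp only [Nat.zero_add] at this
  convert this using 3 with st p
  obtain ⟨a, _ | ⟨b, c⟩⟩ := st <;> rfl

/-- Properties of the position selected by `f_i`. -/
lemma fPos_spec {i p : ℕ} {w : List ℕ} (h : fPos i w = some p) :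
    w[p]? = some i ∧ w[p+1]? ≠ some i ∧ (p = 0 ∨ w[p-1]? ≠ some (i+1)) := by
  obtain ⟨h1, h2, h3, h4, h6, h8⟩ := scanInv_bracketScan i w
  have hmem : p ∈ (bracketScan i w).1 := List.mem_of_mem_head? h
  refine ⟨(h1 p hmem).1, ?_, h8 p h⟩
  rcases h4 p h with hh | hh
  · rw [List.getElem?_eq_none (by omega)]; simp
  · exact hh



/-! ### Row word structure -/

section RowStructure

variable {m n : ℕ}

/-- The labelling of a cell by its letter in the row word. -/
def lab : Fin m × Fin n → ℕ := fun c => (c.1 : ℕ) + 1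

/-- The cells of a single column. -/
def cellsCol (M : Matrix (Fin m) (Fin n) ℕ) (j : Fin n) : List (Fin m × Fin n) :=
  (List.finRange m).flatMap fun i => List.replicate (M i j) (i, j)

lemma rowCells_eq_flatMap (M : Matrix (Fin m) (Fin n) ℕ) :
    rowCells M = (List.finRange n).flatMap (cellsCol M) := rfl

lemma rowWord_eq_map (M : Matrix (Fin m) (Fin n) ℕ) :
    rowWord M = (rowCells M).map lab := by
  simp [rowWord, rowCells, List.map_flatMap, lab]

lemma mem_cellsCol {M : Matrix (Fin m) (Fin n) ℕ} {j : Fin n} {c : Fin m × Fin n}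
    (h : c ∈ cellsCol M j) : c.2 = j ∧ 1 ≤ M c.1 c.2 := by
  rw [cellsCol, List.mem_flatMap] at h
  obtain ⟨i, -, hc⟩ := h
  have hne : M i j ≠ 0 := by
    rintro h0; rw [h0] at hc; simp at hc
  have := List.eq_of_mem_replicate hc
  subst this
  refine ⟨rfl, ?_⟩
  show 1 ≤ M i j
  omega

lemma mem_rowCells {M : Matrix (Fin m) (Fin n) ℕ} {c : Fin m × Fin n}
    (h : c ∈ rowCells M) : 1 ≤ M c.1 c.2 := by
  rw [rowCells_eq_flatMap, List.mem_flatMap] at h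
  obtain ⟨j, -, hc⟩ := h
  exact (mem_cellsCol hc).2

lemma mem_rowWord {M : Matrix (Fin m) (Fin n) ℕ} {x : ℕ} (h : x ∈ rowWord M) :
    1 ≤ x ∧ x ≤ m := by
  rw [rowWord_eq_map, List.mem_map] at h
  obtain ⟨c, -, rfl⟩ := h
  have := c.1.isLt
  simp only [lab]
  omega

lemma mem_take_finRange {k : ℕ} {c : ℕ} {a : Fin c}
    (h : a ∈ (List.finRange c).take k) : (a : ℕ) < k := by
  obtain ⟨t, ht, rfl⟩ := List.getElem_of_mem h
  rw [List.getElem_take] at *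
  have ht' : t < k := by
    simpa using lt_of_lt_of_le ht (by simp [List.length_take])
  rw [List.getElem_finRange]
  simpa using ht'

lemma mem_drop_finRange {k : ℕ} {c : ℕ} {a : Fin c}
    (h : a ∈ (List.finRange c).drop k) : k ≤ (a : ℕ) := by
  obtain ⟨t, ht, rfl⟩ := List.getElem_of_mem h
  rw [List.getElem_drop, List.getElem_finRange]
  simp

lemma finRange_split {c : ℕ} (j : Fin c) :
    List.finRange c = (List.finRange c).take (j : ℕ) ++
      j :: (List.finRange c).drop ((j : ℕ) + 1) := by
  have hlt : (j : ℕ) < (List.finRange c).length := by simp [j.isLt]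
  conv_lhs => rw [← List.take_append_drop (j : ℕ) (List.finRange c)]
  rw [List.drop_eq_getElem_cons hlt, List.getElem_finRange]
  congr 2

lemma finRange_split2 {c : ℕ} (i0 i1 : Fin c) (hi : (i1 : ℕ) = (i0 : ℕ) + 1) :
    List.finRange c = (List.finRange c).take (i0 : ℕ) ++
      i0 :: i1 :: (List.finRange c).drop ((i0 : ℕ) + 2) := by
  have hlt : (i0 : ℕ) + 1 < (List.finRange c).length := by simp [hi ▸ i1.isLt]
  have h2 : (List.finRange c).drop ((i0 : ℕ) + 1) =
      i1 :: (List.finRange c).drop ((i0 : ℕ) + 2) := by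
    rw [List.drop_eq_getElem_cons hlt, List.getElem_finRange]
    congr 1
    apply Fin.ext
    simp [hi]
  conv_lhs => rw [finRange_split i0]
  rw [h2]

lemma flatMap_congr {α β : Type*} {l : List α} {f g : α → List β}
    (h : ∀ a ∈ l, f a = g a) : l.flatMap f = l.flatMap g := by
  induction l with
  | nil => rfl
  | cons x xs ih =>
    rw [List.flatMap_cons, List.flatMap_cons, h x (List.mem_cons_self),
      ih fun a ha => h a (List.mem_cons_of_mem _ ha)]

/-- The two-row decomposition of the cell list of a matrix in a given column. -/
lemma decompCells (M : Matrix (Fin m) (Fin n) ℕ) (i0 i1 : Fin m)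
    (hi : (i1 : ℕ) = (i0 : ℕ) + 1) (j : Fin n) :
    ∃ Pc Qc : List (Fin m × Fin n),
      (∀ N : Matrix (Fin m) (Fin n) ℕ,
        (∀ a b, b ≠ j ∨ (a ≠ i0 ∧ a ≠ i1) → N a b = M a b) →
        rowCells N = Pc ++ (List.replicate (N i0 j) (i0, j) ++
          (List.replicate (N i1 j) (i1, j) ++ Qc))) ∧
      (∀ c ∈ Pc, (c.2 : ℕ) < (j : ℕ) ∨ (c.2 = j ∧ (c.1 : ℕ) < (i0 : ℕ))) ∧
      (∀ c ∈ Qc, (j : ℕ) < (c.2 : ℕ) ∨ (c.2 = j ∧ (i1 : ℕ) < (c.1 : ℕ))) := by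
  classical
  refine ⟨((List.finRange n).take (j : ℕ)).flatMap (cellsCol M) ++
      (((List.finRange m).take (i0 : ℕ)).flatMap fun i => List.replicate (M i j) (i, j)),
    (((List.finRange m).drop ((i0 : ℕ) + 2)).flatMap fun i => List.replicate (M i j) (i, j))
      ++ ((List.finRange n).drop ((j : ℕ) + 1)).flatMap (cellsCol M), ?_, ?_, ?_⟩
  · intro N hN
    have hcolsame : ∀ b : Fin n, b ≠ j → cellsCol N b = cellsCol M b := by
      intro b hb
      unfold cellsCol
      congr 1
      funext i
      rw [hN i b (Or.inl hb)]
    have htake : ((List.finRange n).take (j : ℕ)).flatMap (cellsCol N) =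
        ((List.finRange n).take (j : ℕ)).flatMap (cellsCol M) :=
      flatMap_congr fun b hb => hcolsame b
        (fun h => by have := mem_take_finRange hb; subst h; omega)
    have hdropc : ((List.finRange n).drop ((j : ℕ) + 1)).flatMap (cellsCol N) =
        ((List.finRange n).drop ((j : ℕ) + 1)).flatMap (cellsCol M) :=
      flatMap_congr fun b hb => hcolsame b
        (fun h => by have := mem_drop_finRange hb; subst h; omega)
    have hrow : ∀ i : Fin m, i ≠ i0 → i ≠ i1 →
        List.replicate (N i j) (i, j) = List.replicate (M i j) (i, j) := by
      intro i hi0 hi1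
      rw [hN i j (Or.inr ⟨hi0, hi1⟩)]
    have htr : (((List.finRange m).take (i0 : ℕ)).flatMap
          fun i => List.replicate (N i j) (i, j)) =
        ((List.finRange m).take (i0 : ℕ)).flatMap fun i => List.replicate (M i j) (i, j) :=
      flatMap_congr fun a ha => by
        have := mem_take_finRange ha
        exact hrow a (fun h => by subst h; omega) (fun h => by subst h; omega)
    have hdr : (((List.finRange m).drop ((i0 : ℕ) + 2)).flatMap
          fun i => List.replicate (N i j) (i, j)) =
        ((List.finRange m).drop ((i0 : ℕ) + 2)).flatMap
          fun i => List.replicate (M i j) (i, j) :=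
      flatMap_congr fun a ha => by
        have := mem_drop_finRange ha
        exact hrow a (fun h => by subst h; omega) (fun h => by subst h; omega)
    have hj : cellsCol N j = (((List.finRange m).take (i0 : ℕ)).flatMap
          fun i => List.replicate (N i j) (i, j)) ++
        (List.replicate (N i0 j) (i0, j) ++ (List.replicate (N i1 j) (i1, j) ++
        (((List.finRange m).drop ((i0 : ℕ) + 2)).flatMap
          fun i => List.replicate (N i j) (i, j)))) := by
      unfold cellsCol
      conv_lhs => rw [finRange_split2 i0 i1 hi]
      rw [List.flatMap_append, List.flatMap_cons, List.flatMap_cons]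
    rw [rowCells_eq_flatMap]
    conv_lhs => rw [finRange_split j]
    rw [List.flatMap_append, List.flatMap_cons, hj, htake, hdropc, htr, hdr]
    simp [List.append_assoc]
  · intro c hc
    rcases List.mem_append.mp hc with hc | hc
    · rw [List.mem_flatMap] at hc
      obtain ⟨b, hb, hcb⟩ := hc
      left
      rw [(mem_cellsCol hcb).1]
      exact mem_take_finRange hb
    · rw [List.mem_flatMap] at hc
      obtain ⟨a, ha, hca⟩ := hc
      have := List.eq_of_mem_replicate hca
      subst this
      right
      refine ⟨rfl, ?_⟩
      show (a : ℕ) < (i0 : ℕ)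
      exact mem_take_finRange ha
  · intro c hc
    rcases List.mem_append.mp hc with hc | hc
    · rw [List.mem_flatMap] at hc
      obtain ⟨a, ha, hca⟩ := hc
      have := List.eq_of_mem_replicate hca
      subst this
      right
      have := mem_drop_finRange ha
      refine ⟨rfl, ?_⟩
      show (i1 : ℕ) < (a : ℕ)
      omega
    · rw [List.mem_flatMap] at hc
      obtain ⟨b, hb, hcb⟩ := hc
      left
      rw [(mem_cellsCol hcb).1]
      exact mem_drop_finRange hb

end RowStructure


section Transport

variable {m n : ℕ}

lemma set_append_add {α : Type*} (A B : List α) (k : ℕ) (x : α) :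
    (A ++ B).set (A.length + k) x = A ++ B.set k x := by
  rw [List.set_append, if_neg (by omega)]
  have h : A.length + k - A.length = k := by omega
  rw [h]

lemma set_concat_mid (P X Y : List ℕ) (x y k : ℕ) (hX : X.length = k) :
    (P ++ (X ++ (y :: Y))).set (P.length + k) x = P ++ (X ++ (x :: Y)) := by
  subst hX
  rw [set_append_add]
  have h2 := set_append_add X (y :: Y) 0 x
  rw [Nat.add_zero] at h2
  rw [h2]
  rfl

/-- Setting the last letter of the `i`-run to `i+1`. -/
lemma set_run_f (P Q : List ℕ) (u v i : ℕ) (hu : 1 ≤ u) :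
    (P ++ (List.replicate u i ++ (List.replicate v (i+1) ++ Q))).set
        (P.length + (u-1)) (i+1)
      = P ++ (List.replicate (u-1) i ++ (List.replicate (v+1) (i+1) ++ Q)) := by
  obtain ⟨u', rfl⟩ : ∃ u', u = u' + 1 := ⟨u - 1, by omega⟩
  have h1 : List.replicate (u'+1) i ++ (List.replicate v (i+1) ++ Q)
      = List.replicate u' i ++ (i :: (List.replicate v (i+1) ++ Q)) := by
    rw [List.replicate_succ', List.append_assoc]
    rfl
  rw [show u' + 1 - 1 = u' from rfl, h1,
    set_concat_mid P _ _ _ _ u' (by simp)]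
  simp [List.replicate_succ]

/-- Setting the first letter of the `(i+1)`-run to `i`. -/
lemma set_run_e (P Q : List ℕ) (b a i : ℕ) (ha : 1 ≤ a) :
    (P ++ (List.replicate b i ++ (List.replicate a (i+1) ++ Q))).set (P.length + b) i
      = P ++ (List.replicate (b+1) i ++ (List.replicate (a-1) (i+1) ++ Q)) := by
  obtain ⟨a', rfl⟩ : ∃ a', a = a' + 1 := ⟨a - 1, by omega⟩
  have h1 : List.replicate (a'+1) (i+1) ++ Q = (i+1) :: (List.replicate a' (i+1) ++ Q) := by
    rw [List.replicate_succ]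
    rfl
  rw [h1, set_concat_mid P _ _ _ _ b (by simp),
    show a' + 1 - 1 = a' from rfl]
  simp [List.replicate_succ', List.append_assoc]

lemma mem_of_getElem? {α : Type*} {l : List α} {k : ℕ} {c : α} (h : l[k]? = some c) :
    c ∈ l := by
  have hk : k < l.length := by
    by_contra hc
    rw [List.getElem?_eq_none (by omega)] at h
    simp at h
  rw [List.getElem?_eq_getElem hk] at h
  simp only [Option.some.injEq] at h
  exact h ▸ List.getElem_mem hk

/-- Position of an element of the middle block of a list. -/
lemma pos_bound {α : Type*} {Pc mid Qc : List α} {p : ℕ} {c : α}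
    (hp : (Pc ++ (mid ++ Qc))[p]? = some c) (h1 : c ∉ Pc) (h2 : c ∉ Qc) :
    Pc.length ≤ p ∧ p < Pc.length + mid.length := by
  constructor
  · by_contra hlt
    push_neg at hlt
    rw [List.getElem?_append, if_pos (by omega)] at hp
    exact h1 (mem_of_getElem? hp)
  · by_contra hge
    push_neg at hge
    rw [List.getElem?_append_right (by omega)] at hp
    rw [List.getElem?_append_right (by omega)] at hp
    exact h2 (mem_of_getElem? hp)

lemma getElem?_mid {α : Type*} (Pc Qc : List α) {k u : ℕ} (c : α) (mid2 : List α)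
    (hk : k < u) :
    (Pc ++ (List.replicate u c ++ (mid2 ++ Qc)))[Pc.length + k]? = some c := by
  rw [List.getElem?_append_right (by omega)]
  have h : Pc.length + k - Pc.length = k := by omega
  rw [h, List.getElem?_append, if_pos (by simpa using hk)]
  simp [hk]

lemma shiftDown_vals (M : Matrix (Fin m) (Fin n) ℕ) (i0 i1 : Fin m)
    (hi : (i1 : ℕ) = (i0 : ℕ) + 1) (j : Fin n) :
    shiftDown M (i0, j) i0 j = M i0 j - 1 ∧ shiftDown M (i0, j) i1 j = M i1 j + 1 ∧
    ∀ a b, b ≠ j ∨ (a ≠ i0 ∧ a ≠ i1) → shiftDown M (i0, j) a b = M a b := by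
  refine ⟨by simp [shiftDown], ?_, ?_⟩
  · have hne : i1 ≠ i0 := by intro h; rw [h] at hi; omega
    simp [shiftDown, hne, hi]
  · intro a b hab
    unfold shiftDown
    rcases hab with hb | ⟨ha0, ha1⟩
    · rw [if_neg (by simp; intro _; exact fun h => absurd h hb),
        if_neg (by simp; intro _; exact fun h => absurd h hb)]
    · rw [if_neg (by simp; intro h; exact absurd h ha0),
        if_neg ?_]
      simp only [not_and]
      intro hv
      exfalso
      exact ha1 (Fin.ext (by rw [hi]; exact hv))

lemma shiftUp_vals (M : Matrix (Fin m) (Fin n) ℕ) (i0 i1 : Fin m)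
    (hi : (i1 : ℕ) = (i0 : ℕ) + 1) (j : Fin n) :
    shiftUp M (i1, j) i1 j = M i1 j - 1 ∧ shiftUp M (i1, j) i0 j = M i0 j + 1 ∧
    ∀ a b, b ≠ j ∨ (a ≠ i0 ∧ a ≠ i1) → shiftUp M (i1, j) a b = M a b := by
  refine ⟨by simp [shiftUp], ?_, ?_⟩
  · have hne : i0 ≠ i1 := by intro h; rw [h] at hi; omega
    simp [shiftUp, hne, hi]
  · intro a b hab
    unfold shiftUp
    rcases hab with hb | ⟨ha0, ha1⟩
    · rw [if_neg (by simp; intro _; exact fun h => absurd h hb),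
        if_neg (by simp; intro _; exact fun h => absurd h hb)]
    · rw [if_neg (by simp; intro h; exact absurd h ha1),
        if_neg ?_]
      simp only [not_and]
      intro hv
      exfalso
      exact ha0 (Fin.ext (by omega))

end Transport


section Main

variable {m n : ℕ}

/-- Transport of `f_i` along `rowWord`. -/
lemma fRow_transport {M : Matrix (Fin m) (Fin n) ℕ} {i p : ℕ} (hm : i < m)
    (hp : fPos i (rowWord M) = some p) :
    ∃ M', fRow i M = some M' ∧ rowWord M' = (rowWord M).set p (i+1) := by
  classical
  obtain ⟨hwp, hwp1, -⟩ := fPos_spec hp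
  have hlen : p < (rowWord M).length := by
    by_contra hcon
    rw [List.getElem?_eq_none (by omega)] at hwp
    simp at hwp
  have hlen2 : p < (rowCells M).length := by
    rw [rowWord_eq_map] at hlen
    simpa using hlen
  obtain ⟨c, hc⟩ : ∃ c, (rowCells M)[p]? = some c :=
    ⟨(rowCells M)[p], List.getElem?_eq_getElem hlen2⟩
  have hc1 : (c.1 : ℕ) + 1 = i := by
    have := hwp
    rw [rowWord_eq_map, List.getElem?_map, hc] at this
    simpa [lab] using this
  have hi1m : (c.1 : ℕ) + 1 < m := by omega
  set i0 := c.1 with hi0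
  set j := c.2 with hj
  set i1 : Fin m := ⟨(c.1 : ℕ) + 1, hi1m⟩ with hi1def
  have hi1v : (i1 : ℕ) = (i0 : ℕ) + 1 := rfl
  obtain ⟨Pc, Qc, hdec, hPc, hQc⟩ := decompCells M i0 i1 hi1v j
  have hM := hdec M (fun _ _ _ => rfl)
  have hcc : c = (i0, j) := rfl
  rw [hM, hcc] at hc
  set u := M i0 j with hu_def
  set v := M i1 j with hv_def
  have hnotP : (i0, j) ∉ Pc := by
    intro hmem
    rcases hPc _ hmem with h | ⟨-, h⟩ <;> exact absurd h (lt_irrefl _)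
  have hnotQ : (i0, j) ∉ List.replicate v (i1, j) ++ Qc := by
    intro hmem
    rcases List.mem_append.mp hmem with h | h
    · have h2 : i0 = i1 := congrArg Prod.fst (List.eq_of_mem_replicate h)
      rw [h2] at hi1v
      omega
    · rcases hQc _ h with h' | ⟨-, h'⟩
      · exact absurd h' (lt_irrefl _)
      · have h'' : (i1 : ℕ) < (i0 : ℕ) := h'
        omega
  obtain ⟨hge, hlt⟩ := pos_bound hc hnotP hnotQ
  rw [List.length_replicate] at hlt
  have hu : 1 ≤ u := by omega
  set L := Pc.map lab with hL_def
  have hLlen : L.length = Pc.length := by simp [hL_def]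
  have e1 : lab ((i0 : Fin m), j) = i := hc1
  have e2 : lab ((i1 : Fin m), j) = i + 1 := by
    show (i1 : ℕ) + 1 = i + 1
    omega
  have hword : ∀ N : Matrix (Fin m) (Fin n) ℕ,
      rowCells N = Pc ++ (List.replicate (N i0 j) (i0, j) ++
        (List.replicate (N i1 j) (i1, j) ++ Qc)) →
      rowWord N = L ++ (List.replicate (N i0 j) i ++
        (List.replicate (N i1 j) (i+1) ++ Qc.map lab)) := by
    intro N hN
    rw [rowWord_eq_map, hN]
    simp only [List.map_append, List.map_replicate, e1, e2, hL_def]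
  have hwordM := hword M hM
  have hple : Pc.length + u ≤ p + 1 := by
    by_contra hcon
    push_neg at hcon
    have hidx : (rowWord M)[L.length + (p + 1 - Pc.length)]? = some i := by
      rw [hwordM]
      exact getElem?_mid _ _ i _ (by omega)
    rw [hLlen] at hidx
    rw [show Pc.length + (p + 1 - Pc.length) = p + 1 from by omega] at hidx
    exact hwp1 hidx
  have hp_eq : p = L.length + (u - 1) := by omega
  obtain ⟨hd0, hd1, hdoth⟩ := shiftDown_vals M i0 i1 hi1v j
  have hM' := hdec (shiftDown M (i0, j)) hdoth
  rw [hd0, hd1] at hM'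
  have hwordM' := hword (shiftDown M (i0, j)) (by rw [hM', hd0, hd1])
  rw [hd0, hd1] at hwordM'
  refine ⟨shiftDown M (i0, j), ?_, ?_⟩
  · unfold fRow
    rw [hp, Option.bind_some, hM, hc]
    rfl
  · rw [hwordM', hwordM, hp_eq, set_run_f L _ u v i hu]

/-- Construction of a preimage matrix for an incoming `f_i`-edge on row words. -/
lemma eRow_transport {M' : Matrix (Fin m) (Fin n) ℕ} {i p : ℕ} {w₂ : List ℕ}
    (h1 : 1 ≤ i) (hp : fPos i w₂ = some p) (hset : w₂.set p (i+1) = rowWord M') :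
    ∃ M'', rowWord M'' = w₂ ∧ fRow i M'' = some M' := by
  classical
  obtain ⟨hwp, -, hwp8⟩ := fPos_spec hp
  have hlenw : p < w₂.length := by
    by_contra hcon
    rw [List.getElem?_eq_none (by omega)] at hwp
    simp at hwp
  have hlen : p < (rowWord M').length := by
    rw [← hset, List.length_set]
    exact hlenw
  have hW'p : (rowWord M')[p]? = some (i+1) := by
    rw [← hset, List.getElem?_set, if_pos rfl, if_pos hlenw]
  have hW'ne : ∀ q, q ≠ p → (rowWord M')[q]? = w₂[q]? := by
    intro q hq
    rw [← hset, List.getElem?_set, if_neg (fun h => hq h.symm)]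
  have hlen2 : p < (rowCells M').length := by
    rw [rowWord_eq_map] at hlen
    simpa using hlen
  obtain ⟨c, hc⟩ : ∃ c, (rowCells M')[p]? = some c :=
    ⟨(rowCells M')[p], List.getElem?_eq_getElem hlen2⟩
  have hc1 : (c.1 : ℕ) + 1 = i + 1 := by
    have := hW'p
    rw [rowWord_eq_map, List.getElem?_map, hc] at this
    simpa [lab] using this
  have hc1' : (c.1 : ℕ) = i := by omega
  have hi0m : i - 1 < m := by have := c.1.isLt; omega
  set i1 := c.1 with hi1def
  set j := c.2 with hj
  set i0 : Fin m := ⟨i - 1, hi0m⟩ with hi0def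
  have hi1v : (i1 : ℕ) = (i0 : ℕ) + 1 := by
    show (c.1 : ℕ) = (i - 1) + 1
    omega
  obtain ⟨Pc, Qc, hdec, hPc, hQc⟩ := decompCells M' i0 i1 hi1v j
  have hM := hdec M' (fun _ _ _ => rfl)
  have hcc : c = (i1, j) := rfl
  set b := M' i0 j with hb_def
  set a := M' i1 j with ha_def
  -- rewrite with the middle block being the `(i1, j)` replicate
  have hM2 : rowCells M' = (Pc ++ List.replicate b (i0, j)) ++
      (List.replicate a (i1, j) ++ Qc) := by
    rw [hM]
    simp [List.append_assoc]
  rw [hM2, hcc] at hc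
  have hnotP : (i1, j) ∉ Pc ++ List.replicate b (i0, j) := by
    intro hmem
    rcases List.mem_append.mp hmem with h | h
    · rcases hPc _ h with h' | ⟨-, h'⟩
      · exact absurd h' (lt_irrefl _)
      · have h'' : (i1 : ℕ) < (i0 : ℕ) := h'
        omega
    · have h2 : i1 = i0 := congrArg Prod.fst (List.eq_of_mem_replicate h)
      rw [h2] at hi1v
      omega
  have hnotQ : (i1, j) ∉ Qc := by
    intro hmem
    rcases hQc _ hmem with h' | ⟨-, h'⟩
    · exact absurd h' (lt_irrefl _)
    · exact absurd h' (lt_irrefl _)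
  obtain ⟨hge, hlt⟩ := pos_bound (by rw [← List.append_assoc] at hc ⊢; exact hc) hnotP hnotQ
  rw [List.length_append, List.length_replicate] at hge hlt
  rw [List.length_replicate] at hlt
  have ha1 : 1 ≤ a := by omega
  set L := Pc.map lab with hL_def
  have hLlen : L.length = Pc.length := by simp [hL_def]
  have e1 : lab ((i0 : Fin m), j) = i := by
    show (i0 : ℕ) + 1 = i
    show (i - 1) + 1 = i
    omega
  have e2 : lab ((i1 : Fin m), j) = i + 1 := hc1
  have hword : ∀ N : Matrix (Fin m) (Fin n) ℕ,
      rowCells N = Pc ++ (List.replicate (N i0 j) (i0, j) ++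
        (List.replicate (N i1 j) (i1, j) ++ Qc)) →
      rowWord N = L ++ (List.replicate (N i0 j) i ++
        (List.replicate (N i1 j) (i+1) ++ Qc.map lab)) := by
    intro N hN
    rw [rowWord_eq_map, hN]
    simp only [List.map_append, List.map_replicate, e1, e2, hL_def]
  have hwordM := hword M' hM
  rw [← hb_def, ← ha_def] at hwordM
  -- p = |Pc| + b
  have hp_eq : p = Pc.length + b := by
    by_contra hcon
    have hplt : Pc.length + b < p := by omega
    have hp1 : 1 ≤ p := by omega
    have hmid : (rowWord M')[L.length + (p - 1 - Pc.length)]? = some (i+1) := by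
      rw [hwordM]
      have h0 := getElem?_mid (L ++ List.replicate b i) (Qc.map lab) (i+1)
        ([] : List ℕ) (k := p - 1 - Pc.length - b) (u := a) (by omega)
      simp only [List.nil_append, List.append_assoc, List.length_append,
        List.length_replicate] at h0 ⊢
      rw [show L.length + (p - 1 - Pc.length) =
        L.length + b + (p - 1 - Pc.length - b) from by omega]
      exact h0
    rw [hLlen, show Pc.length + (p - 1 - Pc.length) = p - 1 from by omega] at hmid
    rw [hW'ne (p-1) (by omega)] at hmid
    rcases hwp8 with h | h
    · omega
    · exact h hmid
  -- the preimage matrix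
  obtain ⟨hu0, hu1, huoth⟩ := shiftUp_vals M' i0 i1 hi1v j
  set M'' := shiftUp M' (i1, j) with hM''def
  have hM''cells := hdec M'' huoth
  rw [hu0, hu1] at hM''cells
  have hwordM'' := hword M'' (by rw [hM''cells, hu0, hu1])
  rw [hu0, hu1] at hwordM''
  have hw2 : rowWord M'' = w₂ := by
    have hset2 : w₂ = (rowWord M').set p i := by
      apply List.ext_getElem?
      intro q
      rw [List.getElem?_set]
      by_cases hq : p = q
      · subst hq
        rw [if_pos rfl, if_pos hlen, hwp]
      · rw [if_neg hq, hW'ne q (fun h => hq h.symm)]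
    rw [hset2, hwordM, show p = L.length + b from by omega,
      set_run_e L _ b a i ha1, hwordM'']
  refine ⟨M'', hw2, ?_⟩
  have hcells'' : (rowCells M'')[p]? = some ((i0 : Fin m), j) := by
    rw [hM''cells, show p = Pc.length + b from hp_eq]
    exact getElem?_mid Pc Qc _ _ (by omega)
  unfold fRow
  rw [hw2, hp, Option.bind_some, hcells'']
  refine congrArg some ?_
  show shiftDown M'' (i0, j) = M'
  obtain ⟨hdd0, hdd1, hddoth⟩ := shiftDown_vals M'' i0 i1 hi1v j
  funext x y
  by_cases hxy0 : x = i0 ∧ y = j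
  · obtain ⟨rfl, rfl⟩ := hxy0
    rw [hdd0, hu1]
    omega
  · by_cases hxy1 : x = i1 ∧ y = j
    · obtain ⟨rfl, rfl⟩ := hxy1
      rw [hdd1, hu0]
      omega
    · have hcond : y ≠ j ∨ (x ≠ i0 ∧ x ≠ i1) := by tauto
      rw [hddoth x y hcond, huoth x y hcond]

end Main


section Csum

variable {m n : ℕ}

/-- Column sums of a matrix. -/
def csum (M : Matrix (Fin m) (Fin n) ℕ) (j : Fin n) : ℕ := ∑ i, M i j

lemma fRow_elim {i : ℕ} {M M' : Matrix (Fin m) (Fin n) ℕ} (h : fRow i M = some M') :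
    ∃ p c, fPos i (rowWord M) = some p ∧ (rowCells M)[p]? = some c ∧
      M' = shiftDown M c ∧ (c.1 : ℕ) + 1 = i ∧ 1 ≤ M c.1 c.2 := by
  unfold fRow at h
  rcases hp : fPos i (rowWord M) with _ | p
  · rw [hp] at h; simp at h
  · rw [hp, Option.bind_some] at h
    rcases hc : (rowCells M)[p]? with _ | c
    · rw [hc] at h; simp at h
    · rw [hc] at h
      simp only [Option.map_some, Option.some.injEq] at h
      refine ⟨p, c, rfl, hc, h.symm, ?_, mem_rowCells (mem_of_getElem? hc)⟩
      have hwp := (fPos_spec hp).1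
      rw [rowWord_eq_map, List.getElem?_map, hc] at hwp
      simpa [lab] using hwp

lemma csum_shiftDown {M : Matrix (Fin m) (Fin n) ℕ} {c : Fin m × Fin n}
    (hone : 1 ≤ M c.1 c.2) (hlt : (c.1 : ℕ) + 1 < m) (j : Fin n) :
    csum (shiftDown M c) j = csum M j := by
  classical
  by_cases hj : j = c.2
  · subst hj
    set i1 : Fin m := ⟨(c.1 : ℕ) + 1, hlt⟩ with hi1
    have hne : i1 ≠ c.1 := by
      intro h
      have h2 : (c.1 : ℕ) + 1 = (c.1 : ℕ) := congrArg Fin.val h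
      omega
    have h1 : ∀ f : Fin m → ℕ,
        ∑ a, f a = f c.1 + (f i1 + ∑ a ∈ (Finset.univ.erase c.1).erase i1, f a) := by
      intro f
      rw [← Finset.add_sum_erase _ f (Finset.mem_univ c.1),
        ← Finset.add_sum_erase _ f (Finset.mem_erase.mpr ⟨hne, Finset.mem_univ i1⟩)]
    show ∑ a, shiftDown M c a c.2 = ∑ a, M a c.2
    rw [h1 (fun a => shiftDown M c a c.2), h1 (fun a => M a c.2)]
    have hv0 : shiftDown M c c.1 c.2 = M c.1 c.2 - 1 := by simp [shiftDown]
    have hv1 : shiftDown M c i1 c.2 = M i1 c.2 + 1 := by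
      unfold shiftDown
      rw [if_neg (fun h => hne h.1), if_pos ⟨rfl, rfl⟩]
    have hrest : ∑ a ∈ (Finset.univ.erase c.1).erase i1, shiftDown M c a c.2
        = ∑ a ∈ (Finset.univ.erase c.1).erase i1, M a c.2 := by
      apply Finset.sum_congr rfl
      intro a ha
      have h1a : a ≠ i1 := (Finset.mem_erase.mp ha).1
      have h2a : a ≠ c.1 := (Finset.mem_erase.mp (Finset.mem_erase.mp ha).2).1
      unfold shiftDown
      rw [if_neg (fun h => h2a h.1), if_neg ?_]
      simp only [not_and]
      intro hv
      exact absurd (Fin.ext hv : a = i1) h1a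
    rw [hv0, hv1, hrest]
    omega
  · show ∑ a, shiftDown M c a j = ∑ a, M a j
    apply Finset.sum_congr rfl
    intro a _
    unfold shiftDown
    rw [if_neg (fun h => hj h.2), if_neg (fun h => hj h.2)]

lemma csum_fRow {i : ℕ} {M M' : Matrix (Fin m) (Fin n) ℕ} (hm : i < m)
    (h : fRow i M = some M') : ∀ j, csum M' j = csum M j := by
  obtain ⟨p, c, -, -, rfl, hc1, hone⟩ := fRow_elim h
  exact fun j => csum_shiftDown hone (by omega) j

/-- The word of the letters of a single column. -/
def wordCol (M : Matrix (Fin m) (Fin n) ℕ) (j : Fin n) : List ℕ :=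
  (List.finRange m).flatMap fun i => List.replicate (M i j) ((i : ℕ) + 1)

lemma rowWord_eq_flatMap (M : Matrix (Fin m) (Fin n) ℕ) :
    rowWord M = (List.finRange n).flatMap (wordCol M) := rfl

lemma wordCol_length (M : Matrix (Fin m) (Fin n) ℕ) (j : Fin n) :
    (wordCol M j).length = csum M j := by
  rw [wordCol, List.length_flatMap, csum, Fin.sum_univ_def]
  congr 1
  simp [Function.comp_def]

lemma eq_of_flatMap_eq {α β : Type*} :
    ∀ (l : List α) (f g : α → List β), l.flatMap f = l.flatMap g →
      (∀ x ∈ l, (f x).length = (g x).length) → ∀ x ∈ l, f x = g x := by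
  intro l
  induction l with
  | nil => intro f g _ _ x hx; simp at hx
  | cons y ys ih =>
    intro f g h hlen x hx
    rw [List.flatMap_cons, List.flatMap_cons] at h
    obtain ⟨h1, h2⟩ := List.append_inj h (hlen y (List.mem_cons_self))
    rcases List.mem_cons.mp hx with rfl | hx
    · exact h1
    · exact ih f g h2 (fun z hz => hlen z (List.mem_cons_of_mem _ hz)) x hx

lemma count_flatMap {α : Type*} (x : ℕ) (l : List α) (f : α → List ℕ) :
    (l.flatMap f).count x = (l.map fun a => (f a).count x).sum := by
  induction l with
  | nil => rfl
  | cons y ys ih => simp [List.flatMap_cons, List.count_append, ih]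

lemma entry_eq_count (M : Matrix (Fin m) (Fin n) ℕ) (a : Fin m) (b : Fin n) :
    M a b = (wordCol M b).count ((a : ℕ) + 1) := by
  rw [wordCol, count_flatMap]
  have hterm : ∀ i : Fin m,
      (List.replicate (M i b) ((i : ℕ) + 1)).count ((a : ℕ) + 1)
        = if i = a then M i b else 0 := by
    intro i
    rw [List.count_replicate]
    by_cases h : i = a
    · subst h; simp
    · have hv : ¬((i : ℕ) + 1 = (a : ℕ) + 1) := by
        intro hv
        exact h (Fin.ext (by omega))
      rw [if_neg (by simpa using hv), if_neg h]
  simp only [hterm]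
  rw [← Fin.sum_univ_def]
  simp

lemma rowWord_csum_inj {M N : Matrix (Fin m) (Fin n) ℕ} (h : rowWord M = rowWord N)
    (hcs : ∀ j, csum M j = csum N j) : M = N := by
  have hcols : ∀ j, wordCol M j = wordCol N j := by
    intro j
    refine eq_of_flatMap_eq (List.finRange n) _ _ ?_ ?_ j (List.mem_finRange j)
    · rw [← rowWord_eq_flatMap, ← rowWord_eq_flatMap]; exact h
    · intro b _; rw [wordCol_length, wordCol_length, hcs]
  funext a b
  rw [show M a b = (wordCol M b).count ((a : ℕ) + 1) from entry_eq_count M a b,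
    show N a b = (wordCol N b).count ((a : ℕ) + 1) from entry_eq_count N a b, hcols]

end Csum


section RowIso

variable {m n : ℕ}

lemma fRow_fWord {i : ℕ} {M M' : Matrix (Fin m) (Fin n) ℕ} (hm : i < m)
    (h : fRow i M = some M') : fWord i (rowWord M) = some (rowWord M') := by
  obtain ⟨p, c, hp, hc, hM', -, -⟩ := fRow_elim h
  obtain ⟨M'', hf2, hw⟩ := fRow_transport hm hp
  rw [h] at hf2
  have he : M' = M'' := Option.some.inj hf2
  rw [fWord, hp, Option.map_some]
  rw [he, hw]

lemma csum_adj {u v : Matrix (Fin m) (Fin n) ℕ} (h : (MRowGraph m n).Adj u v) :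
    ∀ j, csum u j = csum v j := by
  obtain ⟨-, -, l, hE | hE⟩ := h
  · exact fun j => (csum_fRow hE.2.1 hE.2.2 j).symm
  · exact fun j => csum_fRow hE.2.1 hE.2.2 j

lemma csum_reach {u v : Matrix (Fin m) (Fin n) ℕ} (h : (MRowGraph m n).Reach u v) :
    ∀ j, csum u j = csum v j := by
  induction h with
  | refl => exact fun _ => rfl
  | tail _ hbc ih => exact fun j => (ih j).trans (csum_adj hbc j)

lemma row_local_iso (m n : ℕ) :
    PCG.IsLocalIsoVia (MRowGraph m n) (WordGraph 1 m) id rowWord := by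
  refine ⟨⟨?_, ?_, ?_⟩, ?_, ?_, ?_⟩
  · -- vertices
    intro M _ x hx
    exact mem_rowWord hx
  · -- weights
    intro M _
    rfl
  · -- edges preserved
    rintro l M _ M' _ ⟨h1, h2, h3⟩
    exact ⟨h1, h2, fRow_fWord h2 h3⟩
  · -- injective on components
    intro u _ v _ hre hw
    exact rowWord_csum_inj hw (csum_reach hre)
  · -- surjective onto components
    intro u _ v' _ hre
    induction hre with
    | refl => exact ⟨u, Set.mem_univ u, Relation.ReflTransGen.refl, rfl⟩
    | @tail b c hab hbc ih =>
      obtain ⟨hbv, hcv, l, hE | hE⟩ := hbc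
      · -- forward edge
        obtain ⟨v, -, hrv, rfl⟩ := ih hbv
        obtain ⟨h1, h2, h3⟩ := hE
        rw [fWord] at h3
        rcases hps : fPos l (rowWord v) with _ | p
        · rw [hps] at h3; simp at h3
        · rw [hps, Option.map_some] at h3
          obtain ⟨M'', hfr, hw⟩ := fRow_transport h2 hps
          refine ⟨M'', Set.mem_univ _, hrv.tail ?_, ?_⟩
          · exact ⟨Set.mem_univ _, Set.mem_univ _, l, Or.inl ⟨h1, h2, hfr⟩⟩
          · rw [hw]
            exact Option.some.inj h3
      · -- backward edge
        obtain ⟨v, -, hrv, rfl⟩ := ih hbv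
        obtain ⟨h1, h2, h3⟩ := hE
        rw [fWord] at h3
        rcases hps : fPos l c with _ | p
        · rw [hps] at h3; simp at h3
        · rw [hps, Option.map_some] at h3
          obtain ⟨M'', hw, hfr⟩ := eRow_transport h1 hps (Option.some.inj h3)
          refine ⟨M'', Set.mem_univ _, hrv.tail ?_, hw⟩
          · exact ⟨Set.mem_univ _, Set.mem_univ _, l, Or.inr ⟨h1, h2, hfr⟩⟩
  · -- edges reflected
    rintro l u _ v _ hre ⟨h1, h2, h3⟩
    rw [fWord] at h3
    rcases hps : fPos l (rowWord u) with _ | p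
    · rw [hps] at h3; simp at h3
    · rw [hps, Option.map_some] at h3
      obtain ⟨M'', hfr, hw⟩ := fRow_transport h2 hps
      have hM'' : M'' = v := by
        apply rowWord_csum_inj
        · rw [hw]; exact Option.some.inj h3
        · intro j
          rw [csum_fRow h2 hfr j]
          exact csum_reach hre j
      exact ⟨h1, h2, hM'' ▸ hfr⟩

end RowIso


section ColIso

open Matrix

variable {m n : ℕ}

lemma colWord_eq (M : Matrix (Fin m) (Fin n) ℕ) : colWord M = rowWord Mᵀ := rfl

lemma colCells_eq (M : Matrix (Fin m) (Fin n) ℕ) :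
    colCells M = (rowCells Mᵀ).map Prod.swap := by
  simp [colCells, rowCells, List.map_flatMap, List.map_replicate]

lemma shiftRight_eq (M : Matrix (Fin m) (Fin n) ℕ) (c : Fin n × Fin m) :
    shiftRight M (c.2, c.1) = (shiftDown Mᵀ c)ᵀ := by
  funext a b
  show shiftRight M (c.2, c.1) a b = shiftDown Mᵀ c b a
  unfold shiftRight shiftDown
  by_cases h1 : a = c.2 ∧ b = c.1
  · rw [if_pos ⟨h1.1, h1.2⟩, if_pos ⟨h1.2, h1.1⟩]
    rfl
  · rw [if_neg (fun h : a = c.2 ∧ b = c.1 => h1 h),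
      if_neg (fun h : b = c.1 ∧ a = c.2 => h1 ⟨h.2, h.1⟩)]
    by_cases h2 : a = c.2 ∧ (b : ℕ) = (c.1 : ℕ) + 1
    · rw [if_pos ⟨h2.1, h2.2⟩, if_pos ⟨h2.2, h2.1⟩]
      rfl
    · rw [if_neg (fun h : a = c.2 ∧ (b : ℕ) = (c.1 : ℕ) + 1 => h2 h),
        if_neg (fun h : (b : ℕ) = (c.1 : ℕ) + 1 ∧ a = c.2 => h2 ⟨h.2, h.1⟩)]
      rfl

lemma fCol_eq (j : ℕ) (M : Matrix (Fin m) (Fin n) ℕ) :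
    fCol j M = (fRow j Mᵀ).map Matrix.transpose := by
  unfold fCol fRow
  rw [colWord_eq]
  rcases hps : fPos j (rowWord Mᵀ) with _ | p
  · rfl
  · rw [Option.bind_some, Option.bind_some, colCells_eq, List.getElem?_map]
    rcases hc : (rowCells Mᵀ)[p]? with _ | c
    · rfl
    · simp only [Option.map_some]
      congr 1
      show shiftRight M (c.2, c.1) = (shiftDown Mᵀ c)ᵀ
      exact shiftRight_eq M c

lemma Ecol_iff {l : ℕ} {M M' : Matrix (Fin m) (Fin n) ℕ} :
    (MColGraph m n).E l M M' ↔ (MRowGraph n m).E l Mᵀ M'ᵀ := by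
  show (1 ≤ l ∧ l < n ∧ fCol l M = some M') ↔ (1 ≤ l ∧ l < n ∧ fRow l Mᵀ = some M'ᵀ)
  constructor <;> rintro ⟨h1, h2, h3⟩ <;> refine ⟨h1, h2, ?_⟩
  · rw [fCol_eq] at h3
    rcases hfr : fRow l Mᵀ with _ | N
    · rw [hfr] at h3; simp at h3
    · rw [hfr, Option.map_some] at h3
      have hN : Nᵀ = M' := Option.some.inj h3
      rw [← hN, Matrix.transpose_transpose]
  · rw [fCol_eq, h3, Option.map_some, Matrix.transpose_transpose]

lemma reach_col_row {u v : Matrix (Fin m) (Fin n) ℕ} (h : (MColGraph m n).Reach u v) :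
    (MRowGraph n m).Reach uᵀ vᵀ := by
  induction h with
  | refl => exact Relation.ReflTransGen.refl
  | tail _ hbc ih =>
    obtain ⟨-, -, l, hE | hE⟩ := hbc
    · exact ih.tail ⟨Set.mem_univ _, Set.mem_univ _, l, Or.inl (Ecol_iff.mp hE)⟩
    · exact ih.tail ⟨Set.mem_univ _, Set.mem_univ _, l, Or.inr (Ecol_iff.mp hE)⟩

lemma reach_row_col {u v : Matrix (Fin n) (Fin m) ℕ} (h : (MRowGraph n m).Reach u v) :
    (MColGraph m n).Reach uᵀ vᵀ := by
  induction h with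
  | refl => exact Relation.ReflTransGen.refl
  | tail _ hbc ih =>
    obtain ⟨-, -, l, hE | hE⟩ := hbc
    · refine ih.tail ⟨Set.mem_univ _, Set.mem_univ _, l, Or.inl (Ecol_iff.mpr ?_)⟩
      rwa [Matrix.transpose_transpose, Matrix.transpose_transpose]
    · refine ih.tail ⟨Set.mem_univ _, Set.mem_univ _, l, Or.inr (Ecol_iff.mpr ?_)⟩
      rwa [Matrix.transpose_transpose, Matrix.transpose_transpose]

lemma col_local_iso (m n : ℕ) :
    PCG.IsLocalIsoVia (MColGraph m n) (WordGraph 1 n) id colWord := by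
  obtain ⟨⟨hv, hwt, hedge⟩, hinj, hsurj, hrefl⟩ := row_local_iso n m
  refine ⟨⟨?_, ?_, ?_⟩, ?_, ?_, ?_⟩
  · intro M _
    rw [colWord_eq]
    exact hv Mᵀ (Set.mem_univ _)
  · intro M _
    rfl
  · intro l M _ M' _ hE
    rw [colWord_eq, colWord_eq]
    exact hedge l Mᵀ (Set.mem_univ _) M'ᵀ (Set.mem_univ _) (Ecol_iff.mp hE)
  · intro u _ v _ hre hw
    have h := hinj uᵀ (Set.mem_univ _) vᵀ (Set.mem_univ _) (reach_col_row hre)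
      (by rw [← colWord_eq, ← colWord_eq]; exact hw)
    have := congrArg Matrix.transpose h
    rwa [Matrix.transpose_transpose, Matrix.transpose_transpose] at this
  · intro u _ v' hv' hre
    obtain ⟨w, -, hrw, hww⟩ := hsurj uᵀ (Set.mem_univ _) v' hv'
      (by rw [← colWord_eq]; exact hre)
    refine ⟨wᵀ, Set.mem_univ _, ?_, ?_⟩
    · have := reach_row_col hrw
      rwa [Matrix.transpose_transpose] at this
    · rw [colWord_eq, Matrix.transpose_transpose]
      exact hww
  · intro l u _ v _ hre hE
    apply Ecol_iff.mpr
    exact hrefl l uᵀ (Set.mem_univ _) vᵀ (Set.mem_univ _) (reach_col_row hre)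
      (by rw [← colWord_eq, ← colWord_eq]; exact hE)

end ColIso


/-- The maps `row : M^row_{m,n} → W_m` and `col : M^col_{m,n} → W_n`,
given on vertices by `M ↦ row(M)` and `M ↦ col(M)`, are local isomorphisms of
pre-crystal graphs. -/
theorem row_col_local_isomorphisms (m n : ℕ) :
    PCG.IsLocalIsoVia (MRowGraph m n) (WordGraph 1 m) id rowWord ∧
    PCG.IsLocalIsoVia (MColGraph m n) (WordGraph 1 n) id colWord :=
  ⟨row_local_iso m n, col_local_iso m n⟩

end FilteredRSK
end

section
/- Fix I = {0 = i_0 < … < i_r = m} and J = {0 = j_0 < … < j_s = n}, and an (I|J)-filtered partition-tuple (λ|μ), written as an integer vector (λ_1,…,λ_m | μ_1,…,μ_n) with λ_i ≥ λ_{i+1} for i ∉ I and μ_j ≥ μ_{j+1} for j ∉ J. Then the number of matrices M ∈ Mat_{m,n}(Z≥0) with filterRSK_{I|J}(M) = (T_λ | T_μ) equals the number of matrices M = [m_{ij}] ∈ Mat_{m,n}(Z≥0) (with the convention m_{ij} = 0 whenever i > m or j > n) satisfying: (i) Σ_{k=j}^{n} m_{i+1,k} ≤ Σ_{k=j}^{n}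 m_{i,k+1} for all i ∉ I and all j ∈ [n]; (ii) Σ_{k=i}^{m} m_{k,j+1} ≤ Σ_{k=i}^{m} m_{k+1,j} for all j ∉ J and all i ∈ [m]; (iii) Σ_{j=1}^n m_{ij} = λ_i for all i ∈ [m]; and (iv) Σ_{i=1}^m m_{ij} = μ_j for all j ∈ [n]. -/
namespace FilteredRSK

/-! ### Auxiliary development: ballot words and Knuth moves -/

theorem suffix_append_cases {α : Type*} {s u v : List α} (h : s <:+ u ++ v) :
    s <:+ v ∨ ∃ t, t <:+ u ∧ s = t ++ v := by
  induction u with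
  | nil => exact Or.inl (by simpa using h)
  | cons a u ih =>
    rw [List.cons_append, List.suffix_cons_iff] at h
    rcases h with rfl | h
    · exact Or.inr ⟨a :: u, List.suffix_refl _, rfl⟩
    · rcases ih h with h | ⟨t, ht, rfl⟩
      · exact Or.inl h
      · exact Or.inr ⟨t, ht.trans (List.suffix_cons a u), rfl⟩

/-- Ballot (reverse lattice) condition for the pair of letters `i, i+1`. -/
def Ballot (i : ℕ) (w : List ℕ) : Prop :=
  ∀ s, s <:+ w → List.count (i + 1) s ≤ List.count i s

theorem KnuthStep.append_context {v v' : List ℕ} (h : KnuthStep v v') (u w : List ℕ) :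
    KnuthStep (u ++ v ++ w) (u ++ v' ++ w) := by
  cases h with
  | yzx u0 v0 x y z h1 h2 =>
    have := KnuthStep.yzx (u ++ u0) (v0 ++ w) x y z h1 h2
    simpa using this
  | zxy u0 v0 x y z h1 h2 =>
    have := KnuthStep.zxy (u ++ u0) (v0 ++ w) x y z h1 h2
    simpa using this

theorem KnuthEquiv.append_context {v v' : List ℕ} (h : KnuthEquiv v v') (u w : List ℕ) :
    KnuthEquiv (u ++ v ++ w) (u ++ v' ++ w) := by
  induction h with
  | rel a b hab => exact Relation.EqvGen.rel _ _ (hab.append_context u w)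
  | refl a => exact Relation.EqvGen.refl _
  | symm a b _ ih => exact Relation.EqvGen.symm _ _ ih
  | trans a b c _ _ ih1 ih2 => exact Relation.EqvGen.trans _ _ _ ih1 ih2

theorem KnuthStep.count_eq {w w' : List ℕ} (h : KnuthStep w w') (c : ℕ) :
    List.count c w = List.count c w' := by
  cases h <;>
    simp only [List.append_eq, List.cons_append, List.nil_append, List.count_append, List.count_cons, List.count_nil, beq_iff_eq] <;>
    split_ifs <;> omega

theorem KnuthEquiv.count_eq {w w' : List ℕ} (h : KnuthEquiv w w') (c : ℕ) :
    List.count c w = List.count c w' := by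
  induction h with
  | rel a b hab => exact hab.count_eq c
  | refl a => rfl
  | symm a b _ ih => omega
  | trans a b c _ _ ih1 ih2 => omega

theorem Ballot.kstep {i : ℕ} {w w' : List ℕ} (h : KnuthStep w w') (hb : Ballot i w) :
    Ballot i w' := by
  cases h with
  | yzx u v x y z h1 h2 =>
    intro s hs
    have H0 := hb (y :: z :: x :: v) ⟨u, rfl⟩
    have H1 := hb (z :: x :: v) ⟨u ++ [y], by simp⟩
    have H2 := hb (x :: v) ⟨u ++ [y, z], by simp⟩
    have H3 := hb v ⟨u ++ [y, z, x], by simp⟩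
    have hs' : s <:+ u ++ ([y, x, z] ++ v) := by simpa using hs
    rcases suffix_append_cases hs' with hs2 | ⟨t, ht, rfl⟩
    · rcases List.suffix_cons_iff.mp hs2 with rfl | hs3
      · simp only [List.append_eq, List.cons_append, List.nil_append, List.count_append, List.count_cons, List.count_nil, beq_iff_eq] at H0 ⊢
        split_ifs at H0 ⊢ <;> omega
      · rcases List.suffix_cons_iff.mp hs3 with rfl | hs4
        · simp only [List.append_eq, List.cons_append, List.nil_append, List.count_append, List.count_cons, List.count_nil, beq_iff_eq]
            at H1 ⊢
          split_ifs at H1 ⊢ <;> omega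
        · rcases List.suffix_cons_iff.mp hs4 with rfl | hs5
          · simp only [List.append_eq, List.cons_append, List.nil_append, List.count_append, List.count_cons, List.count_nil, beq_iff_eq]
              at H0 H1 H2 H3 ⊢
            split_ifs at H0 H1 H2 H3 ⊢ <;> omega
          · exact hb s (hs5.trans ⟨u ++ [y, z, x], by simp⟩)
    · obtain ⟨p, rfl⟩ := ht
      have H4 := hb (t ++ ([y, z, x] ++ v)) ⟨p, by simp⟩
      simp only [List.append_eq, List.cons_append, List.nil_append, List.count_append, List.count_cons, List.count_nil, beq_iff_eq] at H4 ⊢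
      split_ifs at H4 ⊢ <;> omega
  | zxy u v x y z h1 h2 =>
    intro s hs
    have H0 := hb (z :: x :: y :: v) ⟨u, rfl⟩
    have H1 := hb (x :: y :: v) ⟨u ++ [z], by simp⟩
    have H2 := hb (y :: v) ⟨u ++ [z, x], by simp⟩
    have H3 := hb v ⟨u ++ [z, x, y], by simp⟩
    have hs' : s <:+ u ++ ([x, z, y] ++ v) := by simpa using hs
    rcases suffix_append_cases hs' with hs2 | ⟨t, ht, rfl⟩
    · rcases List.suffix_cons_iff.mp hs2 with rfl | hs3
      · simp only [List.append_eq, List.cons_append, List.nil_append, List.count_append, List.count_cons, List.count_nil, beq_iff_eq] at H0 ⊢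
        split_ifs at H0 ⊢ <;> omega
      · rcases List.suffix_cons_iff.mp hs3 with rfl | hs4
        · simp only [List.append_eq, List.cons_append, List.nil_append, List.count_append, List.count_cons, List.count_nil, beq_iff_eq]
            at H0 H1 H2 H3 ⊢
          split_ifs at H0 H1 H2 H3 ⊢ <;> omega
        · rcases List.suffix_cons_iff.mp hs4 with rfl | hs5
          · exact hb (y :: v) ⟨u ++ [z, x], by simp⟩
          · exact hb s (hs5.trans ⟨u ++ [z, x, y], by simp⟩)
    · obtain ⟨p, rfl⟩ := ht
      have H4 := hb (t ++ ([z, x, y] ++ v)) ⟨p, by simp⟩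
      simp only [List.append_eq, List.cons_append, List.nil_append, List.count_append, List.count_cons, List.count_nil, beq_iff_eq] at H4 ⊢
      split_ifs at H4 ⊢ <;> omega

theorem Ballot.kstep_rev {i : ℕ} {w w' : List ℕ} (h : KnuthStep w w') (hb : Ballot i w') :
    Ballot i w := by
  cases h with
  | yzx u v x y z h1 h2 =>
    intro s hs
    have H0 := hb (y :: x :: z :: v) ⟨u, rfl⟩
    have H1 := hb (x :: z :: v) ⟨u ++ [y], by simp⟩
    have H2 := hb (z :: v) ⟨u ++ [y, x], by simp⟩
    have H3 := hb v ⟨u ++ [y, x, z], by simp⟩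
    have hs' : s <:+ u ++ ([y, z, x] ++ v) := by simpa using hs
    rcases suffix_append_cases hs' with hs2 | ⟨t, ht, rfl⟩
    · rcases List.suffix_cons_iff.mp hs2 with rfl | hs3
      · simp only [List.append_eq, List.cons_append, List.nil_append, List.count_append, List.count_cons, List.count_nil, beq_iff_eq] at H0 ⊢
        split_ifs at H0 ⊢ <;> omega
      · rcases List.suffix_cons_iff.mp hs3 with rfl | hs4
        · simp only [List.append_eq, List.cons_append, List.nil_append, List.count_append, List.count_cons, List.count_nil, beq_iff_eq]
            at H1 ⊢
          split_ifs at H1 ⊢ <;> omega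
        · rcases List.suffix_cons_iff.mp hs4 with rfl | hs5
          · simp only [List.append_eq, List.cons_append, List.nil_append, List.count_append, List.count_cons, List.count_nil, beq_iff_eq]
              at H0 H1 H2 H3 ⊢
            split_ifs at H0 H1 H2 H3 ⊢ <;> omega
          · exact hb s (hs5.trans ⟨u ++ [y, x, z], by simp⟩)
    · obtain ⟨p, rfl⟩ := ht
      have H4 := hb (t ++ ([y, x, z] ++ v)) ⟨p, by simp⟩
      simp only [List.append_eq, List.cons_append, List.nil_append, List.count_append, List.count_cons, List.count_nil, beq_iff_eq] at H4 ⊢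
      split_ifs at H4 ⊢ <;> omega
  | zxy u v x y z h1 h2 =>
    intro s hs
    have H0 := hb (x :: z :: y :: v) ⟨u, rfl⟩
    have H1 := hb (z :: y :: v) ⟨u ++ [x], by simp⟩
    have H2 := hb (y :: v) ⟨u ++ [x, z], by simp⟩
    have H3 := hb v ⟨u ++ [x, z, y], by simp⟩
    have hs' : s <:+ u ++ ([z, x, y] ++ v) := by simpa using hs
    rcases suffix_append_cases hs' with hs2 | ⟨t, ht, rfl⟩
    · rcases List.suffix_cons_iff.mp hs2 with rfl | hs3
      · simp only [List.append_eq, List.cons_append, List.nil_append, List.count_append, List.count_cons, List.count_nil, beq_iff_eq] at H0 ⊢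
        split_ifs at H0 ⊢ <;> omega
      · rcases List.suffix_cons_iff.mp hs3 with rfl | hs4
        · simp only [List.append_eq, List.cons_append, List.nil_append, List.count_append, List.count_cons, List.count_nil, beq_iff_eq]
            at H0 H1 H2 H3 ⊢
          split_ifs at H0 H1 H2 H3 ⊢ <;> omega
        · rcases List.suffix_cons_iff.mp hs4 with rfl | hs5
          · exact hb (y :: v) ⟨u ++ [x, z], by simp⟩
          · exact hb s (hs5.trans ⟨u ++ [x, z, y], by simp⟩)
    · obtain ⟨p, rfl⟩ := ht
      have H4 := hb (t ++ ([x, z, y] ++ v)) ⟨p, by simp⟩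
      simp only [List.append_eq, List.cons_append, List.nil_append, List.count_append, List.count_cons, List.count_nil, beq_iff_eq] at H4 ⊢
      split_ifs at H4 ⊢ <;> omega

theorem Ballot.kequiv {i : ℕ} {w w' : List ℕ} (h : KnuthEquiv w w') :
    Ballot i w ↔ Ballot i w' := by
  induction h with
  | rel a b hab => exact ⟨fun hb => hb.kstep hab, fun hb => hb.kstep_rev hab⟩
  | refl a => exact Iff.rfl
  | symm a b _ ih => exact ih.symm
  | trans a b c _ _ ih1 ih2 => exact ih1.trans ih2


/-! ### Row reading word and insertion -/

/-- Row reading word: rows bottom-to-top, each row left-to-right. -/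
def rword (T : List (List ℕ)) : List ℕ := T.reverse.flatten

theorem rword_nil : rword [] = [] := rfl

theorem rword_cons (R : List ℕ) (T : List (List ℕ)) :
    rword (R :: T) = rword T ++ R := by
  simp [rword]

theorem findIdx?_some_facts {R : List ℕ} {x k : ℕ}
    (hf : R.findIdx? (fun y => decide (x < y)) = some k) :
    k < R.length ∧ x < R.getD k 0 ∧ ∀ j, j < k → R.getD j 0 ≤ x := by
  obtain ⟨hk, hidx⟩ := List.findIdx?_eq_some_iff_findIdx_eq.mp hf
  subst hidx
  refine ⟨hk, ?_, ?_⟩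
  · rw [List.getD_eq_getElem _ _ hk]
    simpa using List.findIdx_getElem (w := hk)
  · intro j hj
    have hjR : j < R.length := lt_trans hj hk
    have := List.not_of_lt_findIdx hj
    rw [List.getD_eq_getElem _ _ hjR]
    simpa using this

theorem insertRow_eq_some {R : List ℕ} {x k : ℕ}
    (hf : R.findIdx? (fun y => decide (x < y)) = some k) (hk : k < R.length) :
    insertRow R x = (R.set k x, some (R.getD k 0)) := by
  unfold insertRow
  rw [hf]
  show (R.set k x, R[k]?) = (R.set k x, some (R.getD k 0))
  rw [List.getElem?_eq_getElem hk, List.getD_eq_getElem _ _ hk]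

theorem insertRow_eq_none {R : List ℕ} {x : ℕ}
    (hf : R.findIdx? (fun y => decide (x < y)) = none) :
    insertRow R x = (R ++ [x], none) := by
  unfold insertRow; rw [hf]

theorem bubble_x (x y : ℕ) (hxy : x < y) :
    ∀ (Q u : List ℕ), Q.Pairwise (· ≤ ·) → (∀ q ∈ Q, y ≤ q) →
      KnuthEquiv (u ++ y :: (Q ++ [x])) (u ++ y :: x :: Q)
  | [], u, _, _ => by simpa using (show KnuthEquiv (u ++ [y, x]) (u ++ [y, x]) from Relation.EqvGen.refl (r := KnuthStep) (u ++ [y, x]))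
  | q :: Q, u, hQ, hyQ => by
    have hyq : y ≤ q := hyQ q (by simp)
    have hQ' : Q.Pairwise (· ≤ ·) := (List.pairwise_cons.mp hQ).2
    have hqQ : ∀ q' ∈ Q, q ≤ q' := (List.pairwise_cons.mp hQ).1
    have ih := bubble_x x q (lt_of_lt_of_le hxy hyq) Q (u ++ [y]) hQ' hqQ
    have step : KnuthStep (u ++ y :: q :: x :: Q) (u ++ y :: x :: q :: Q) :=
      KnuthStep.yzx u Q x y q hxy hyq
    refine Relation.EqvGen.trans _ _ _ ?_ (Relation.EqvGen.rel _ _ step)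
    show KnuthEquiv _ _; simpa [List.append_assoc] using ih

theorem bubble_y : ∀ (P : List ℕ) (u v : List ℕ) (c y : ℕ),
    P.Pairwise (· ≤ ·) → (∀ p ∈ P, p ≤ c) → c < y →
    KnuthEquiv (u ++ (P ++ y :: c :: v)) (u ++ y :: (P ++ c :: v)) := by
  intro P
  induction P using List.reverseRecOn with
  | nil =>
    intro u v c y _ _ _
    exact Relation.EqvGen.refl _
  | append_singleton P p ih =>
    intro u v c y hP hPc hcy
    have hp : p ≤ c := hPc p (by simp)
    have hP' : P.Pairwise (· ≤ ·) := (List.pairwise_append.mp hP).1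
    have hPp : ∀ a ∈ P, a ≤ p := fun a ha => (List.pairwise_append.mp hP).2.2 a ha p (by simp)
    have step : KnuthStep ((u ++ P) ++ y :: p :: c :: v) ((u ++ P) ++ p :: y :: c :: v) :=
      KnuthStep.zxy (u ++ P) v p c y hp hcy
    have ih' := ih u (c :: v) p y hP' hPp (lt_of_le_of_lt hp hcy)
    refine Relation.EqvGen.trans _ ((u ++ P) ++ y :: p :: c :: v) _ ?_ ?_
    · have h2 := Relation.EqvGen.symm _ _ (Relation.EqvGen.rel _ _ step)
      simpa [List.append_assoc] using h2
    · show KnuthEquiv _ _; simpa [List.append_assoc] using ih'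

theorem insertRow_bump_knuth {R : List ℕ} {x k : ℕ} (hR : R.Pairwise (· ≤ ·))
    (hf : R.findIdx? (fun y => decide (x < y)) = some k) :
    KnuthEquiv (R ++ [x]) (R.getD k 0 :: R.set k x) := by
  obtain ⟨hk, hxk, hjx⟩ := findIdx?_some_facts hf
  set P := R.take k with hPdef
  set y := R.getD k 0 with hydef
  set Q := R.drop (k + 1) with hQdef
  have hdecomp : R = P ++ y :: Q := by
    rw [hydef, List.getD_eq_getElem _ _ hk, hPdef, hQdef, List.getElem_cons_drop]
    exact (List.take_append_drop k R).symm
  have hset : R.set k x = P ++ x :: Q := by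
    rw [List.set_eq_take_append_cons_drop, if_pos hk]
  have hPx : ∀ p ∈ P, p ≤ x := by
    intro p hp
    obtain ⟨j, hjlen, hjp⟩ := List.mem_take_iff_getElem.mp hp
    have hjk : j < k := by omega
    have := hjx j hjk
    rw [List.getD_eq_getElem _ _ (lt_trans hjk hk)] at this
    exact hjp ▸ this
  have hPsort : P.Pairwise (· ≤ ·) := hR.sublist (List.take_sublist _ _)
  have hRPQ : (P ++ y :: Q).Pairwise (· ≤ ·) := hdecomp ▸ hR
  have hyQ : ∀ q ∈ Q, y ≤ q := by
    have := (List.pairwise_append.mp hRPQ).2.1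
    exact (List.pairwise_cons.mp this).1
  have hQsort : Q.Pairwise (· ≤ ·) := by
    have := (List.pairwise_append.mp hRPQ).2.1
    exact (List.pairwise_cons.mp this).2
  have step1 := bubble_x x y hxk Q P hQsort hyQ
  have step2 := bubble_y P [] Q x y hPsort hPx hxk
  refine Relation.EqvGen.trans _ (P ++ y :: x :: Q) _ ?_ ?_
  · have : R ++ [x] = P ++ y :: (Q ++ [x]) := by
      rw [hdecomp]; simp [List.append_assoc]
    rw [this]; exact step1
  · rw [hset]
    show KnuthEquiv _ _; simpa using step2

/-! ### Insertion is Knuth equivalence -/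

theorem insertTab_knuth : ∀ (T : List (List ℕ)) (x : ℕ),
    (∀ row ∈ T, row.Pairwise (· ≤ ·)) →
    KnuthEquiv (rword T ++ [x]) (rword (insertTab T x))
  | [], x, _ => by
    simp only [insertTab, rword_nil, rword_cons, List.nil_append]
    exact Relation.EqvGen.refl _
  | R :: rest, x, hrows => by
    have hRsort : R.Pairwise (· ≤ ·) := hrows R (by simp)
    rcases hf : R.findIdx? (fun y => decide (x < y)) with _ | k
    · have hIR := insertRow_eq_none (R := R) (x := x) hf
      have : insertTab (R :: rest) x = (R ++ [x]) :: rest := by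
        simp [insertTab, hIR]
      rw [this, rword_cons, rword_cons]
      simp only [← List.append_assoc]
      exact Relation.EqvGen.refl _
    · obtain ⟨hk, hxk, hjx⟩ := findIdx?_some_facts hf
      have hIR := insertRow_eq_some hf hk
      have heq : insertTab (R :: rest) x = R.set k x :: insertTab rest (R.getD k 0) := by
        simp [insertTab, hIR]
      rw [heq, rword_cons, rword_cons]
      have hbump := insertRow_bump_knuth hRsort hf
      have h1 : KnuthEquiv (rword rest ++ (R ++ [x]))
          (rword rest ++ (R.getD k 0 :: R.set k x)) := by
        have := hbump.append_context (rword rest) []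
        simpa using this
      have ih := insertTab_knuth rest (R.getD k 0) (fun row hrow => hrows row (by simp [hrow]))
      have h2 : KnuthEquiv ((rword rest ++ [R.getD k 0]) ++ R.set k x)
          (rword (insertTab rest (R.getD k 0)) ++ R.set k x) := by
        have := ih.append_context [] (R.set k x)
        simpa using this
      refine Relation.EqvGen.trans _ (rword rest ++ (R.getD k 0 :: R.set k x)) _ ?_ ?_
      · show KnuthEquiv _ _; simpa [List.append_assoc] using h1
      · show KnuthEquiv _ _; simpa [List.append_assoc] using h2

theorem insertRow_fst_sorted {R : List ℕ} (hR : R.Pairwise (· ≤ ·)) (x : ℕ) :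
    (insertRow R x).1.Pairwise (· ≤ ·) := by
  rcases hf : R.findIdx? (fun y => decide (x < y)) with _ | k
  · rw [insertRow_eq_none hf]
    rw [List.pairwise_append]
    refine ⟨hR, by simp, ?_⟩
    intro a ha b hb
    rw [List.mem_singleton] at hb
    subst hb
    have := List.findIdx?_eq_none_iff.mp hf a ha
    simpa using this
  · obtain ⟨hk, hxk, hjx⟩ := findIdx?_some_facts hf
    rw [insertRow_eq_some hf hk]
    simp only
    rw [List.pairwise_iff_getElem] at hR ⊢
    intro i j hi hj hij
    simp only [List.length_set] at hi hj
    rw [List.getElem_set, List.getElem_set]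
    rcases eq_or_ne k i with rfl | hki
    · rw [if_pos rfl, if_neg (by omega)]
      have hKj : R.getD k 0 ≤ R[j] := by
        rw [List.getD_eq_getElem _ _ hk]
        exact hR k j hk hj hij
      omega
    · rw [if_neg hki]
      rcases eq_or_ne k j with rfl | hkj
      · rw [if_pos rfl]
        have := hjx i (by omega)
        rw [List.getD_eq_getElem _ _ hi] at this
        omega
      · rw [if_neg hkj]
        exact hR i j hi hj hij

theorem insertTab_rows_sorted : ∀ (T : List (List ℕ)) (x : ℕ),
    (∀ row ∈ T, row.Pairwise (· ≤ ·)) →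
    ∀ row ∈ insertTab T x, row.Pairwise (· ≤ ·)
  | [], x, _ => by
    intro row hrow
    simp only [insertTab, List.mem_singleton] at hrow
    subst hrow; simp
  | R :: rest, x, hrows => by
    have hRsort : R.Pairwise (· ≤ ·) := hrows R (by simp)
    have hrest : ∀ row ∈ rest, row.Pairwise (· ≤ ·) := fun row h => hrows row (by simp [h])
    rcases hf : R.findIdx? (fun y => decide (x < y)) with _ | k
    · have hIR := insertRow_eq_none (R := R) (x := x) hf
      have heq : insertTab (R :: rest) x = (R ++ [x]) :: rest := by simp [insertTab, hIR]
      rw [heq]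
      intro row hrow
      rcases List.mem_cons.mp hrow with rfl | hrow
      · have := insertRow_fst_sorted hRsort x
        rw [hIR] at this; exact this
      · exact hrest row hrow
    · obtain ⟨hk, hxk, hjx⟩ := findIdx?_some_facts hf
      have hIR := insertRow_eq_some hf hk
      have heq : insertTab (R :: rest) x = R.set k x :: insertTab rest (R.getD k 0) := by
        simp [insertTab, hIR]
      rw [heq]
      intro row hrow
      rcases List.mem_cons.mp hrow with rfl | hrow
      · have := insertRow_fst_sorted hRsort x
        rw [hIR] at this; exact this
      · exact insertTab_rows_sorted rest (R.getD k 0) hrest row hrow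

theorem tabOf_rows_sorted (w : List ℕ) :
    ∀ row ∈ tabOf w, row.Pairwise (· ≤ ·) := by
  induction w using List.reverseRecOn with
  | nil => intro row hrow; simp [tabOf] at hrow
  | append_singleton u x ih =>
    have : tabOf (u ++ [x]) = insertTab (tabOf u) x := by
      simp [tabOf, List.foldl_append]
    rw [this]
    exact insertTab_rows_sorted _ _ ih

theorem tabOf_knuth (w : List ℕ) : KnuthEquiv w (rword (tabOf w)) := by
  induction w using List.reverseRecOn with
  | nil => exact Relation.EqvGen.refl _
  | append_singleton u x ih =>
    have heq : tabOf (u ++ [x]) = insertTab (tabOf u) x := by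
      simp [tabOf, List.foldl_append]
    rw [heq]
    refine Relation.EqvGen.trans _ (rword (tabOf u) ++ [x]) _ ?_ ?_
    · have := ih.append_context [] [x]
      show KnuthEquiv _ _; simpa using this
    · exact insertTab_knuth _ _ (tabOf_rows_sorted u)


/-! ### Insertion preserves semistandardness -/

theorem getD_set_eq {R : List ℕ} {k j x : ℕ} (hj : j < R.length) :
    (R.set k x).getD j 0 = if k = j then x else R.getD j 0 := by
  rw [List.getD_eq_getElem _ _ (by simpa using hj), List.getElem_set]
  split_ifs with h
  · rfl
  · rw [List.getD_eq_getElem _ _ hj]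

theorem getD_mem {R : List ℕ} {j : ℕ} (hj : j < R.length) : R.getD j 0 ∈ R := by
  rw [List.getD_eq_getElem _ _ hj]
  exact List.getElem_mem hj

theorem insertTab_isSSYT : ∀ (T : List (List ℕ)) (x : ℕ), IsSSYT T → IsSSYT (insertTab T x)
  | [], x, _ => by
    refine ⟨?_, ?_, ?_⟩ <;> simp [insertTab, List.Chain']
  | R :: rest, x, hT => by
    obtain ⟨hne, hsort, hchain⟩ := hT
    have hRne : R ≠ [] := hne R (by simp)
    have hRlen : 0 < R.length := List.length_pos_of_ne_nil hRne
    have hRsort : R.Pairwise (· ≤ ·) := List.isChain_iff_pairwise.mp (hsort R (by simp))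
    have hrest : IsSSYT rest :=
      ⟨fun r h => hne r (by simp [h]), fun r h => hsort r (by simp [h]),
        (List.isChain_cons.mp hchain).2⟩
    have hhead := (List.isChain_cons.mp hchain).1
    rcases hf : R.findIdx? (fun y => decide (x < y)) with _ | k
    · have hIR := insertRow_eq_none (R := R) (x := x) hf
      have heq : insertTab (R :: rest) x = (R ++ [x]) :: rest := by simp [insertTab, hIR]
      rw [heq]
      have hsort' : (R ++ [x]).Chain' (· ≤ ·) := by
        have := insertRow_fst_sorted hRsort x
        rw [hIR] at this
        exact List.isChain_iff_pairwise.mpr this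
      refine ⟨?_, ?_, ?_⟩
      · intro row hrow
        rcases List.mem_cons.mp hrow with rfl | hrow
        · simp
        · exact hne row (by simp [hrow])
      · intro row hrow
        rcases List.mem_cons.mp hrow with rfl | hrow
        · exact hsort'
        · exact hsort row (by simp [hrow])
      · rw [show @List.Chain' (List ℕ) = List.IsChain from rfl, List.isChain_cons]
        refine ⟨?_, hrest.2.2⟩
        intro S hS
        have hRS := hhead S hS
        refine ⟨hRS.1.trans (by simp), ?_⟩
        intro j hj
        rw [List.getD_append _ _ _ _ (lt_of_lt_of_le hj hRS.1)]
        exact hRS.2 j hj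
    · obtain ⟨hk, hxk, hjx⟩ := findIdx?_some_facts hf
      have hIR := insertRow_eq_some hf hk
      have heq : insertTab (R :: rest) x = R.set k x :: insertTab rest (R.getD k 0) := by
        simp [insertTab, hIR]
      rw [heq]
      set y := R.getD k 0 with hy
      have hU : IsSSYT (insertTab rest y) := insertTab_isSSYT rest y hrest
      have hsetsort : (R.set k x).Chain' (· ≤ ·) := by
        have := insertRow_fst_sorted hRsort x
        rw [hIR] at this
        exact List.isChain_iff_pairwise.mpr this
      refine ⟨?_, ?_, ?_⟩
      · intro row hrow
        rcases List.mem_cons.mp hrow with rfl | hrow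
        · intro hcon
          have hlen0 : (R.set k x).length = 0 := by rw [hcon]; rfl
          rw [List.length_set] at hlen0
          omega
        · exact hU.1 row hrow
      · intro row hrow
        rcases List.mem_cons.mp hrow with rfl | hrow
        · exact hsetsort
        · exact hU.2.1 row hrow
      · rw [show @List.Chain' (List ℕ) = List.IsChain from rfl, List.isChain_cons]
        refine ⟨?_, hU.2.2⟩
        intro S' hS'
        match rest, hS', hhead with
        | [], hS', _ =>
          have hS'' : S' = [y] := by
            simp [insertTab] at hS'
            exact hS'.symm
          subst hS''
          constructor
          · simp only [List.length_singleton, List.length_set]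
            omega
          · intro j hj
            simp only [List.length_singleton] at hj
            have hj0 : j = 0 := by omega
            subst hj0
            rw [getD_set_eq hRlen]
            simp only [List.getD_cons_zero]
            split_ifs with hk0
            · exact hxk
            · have := hjx 0 (by omega)
              omega
        | S :: rest2, hS', hhead =>
          have hSR := hhead S (by simp)
          have hSlenR : S.length ≤ R.length := hSR.1
          rcases hfS : S.findIdx? (fun s => decide (y < s)) with _ | p
          · -- y appended at end of S
            have hIRS := insertRow_eq_none (R := S) (x := y) hfS
            have hSle : ∀ s ∈ S, s ≤ y := by
              intro s hs
              have := List.findIdx?_eq_none_iff.mp hfS s hs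
              simpa using this
            have heq2 : insertTab (S :: rest2) y = (S ++ [y]) :: rest2 := by
              simp [insertTab, hIRS]
            rw [heq2] at hS'
            simp only [List.head?_cons, Option.mem_some_iff] at hS'
            subst hS'
            have hSk : S.length ≤ k := by
              by_contra hcon
              push_neg at hcon
              have h1 := hSR.2 k hcon
              have h2 := hSle (S.getD k 0) (getD_mem (by omega))
              omega
            constructor
            · simp only [List.length_append, List.length_set, List.length_singleton]
              omega
            · intro j hj
              simp only [List.length_append, List.length_singleton] at hj
              rcases lt_or_eq_of_le (Nat.lt_succ_iff.mp hj) with hjS | hjS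
              · rw [List.getD_append _ _ _ _ hjS, getD_set_eq (by omega)]
                rw [if_neg (by omega)]
                exact hSR.2 j hjS
              · subst hjS
                rw [List.getD_append_right _ _ _ _ (le_refl _)]
                simp only [Nat.sub_self, List.getD_cons_zero]
                rw [getD_set_eq (by omega)]
                split_ifs with hkj
                · exact hxk
                · have := hjx S.length (by omega)
                  omega
          · -- y bumps in S at position p
            obtain ⟨hp, hyp, hjp⟩ := findIdx?_some_facts hfS
            have hIRS := insertRow_eq_some hfS hp
            have heq2 : insertTab (S :: rest2) y =
                S.set p y :: insertTab rest2 (S.getD p 0) := by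
              simp [insertTab, hIRS]
            rw [heq2] at hS'
            simp only [List.head?_cons, Option.mem_some_iff] at hS'
            subst hS'
            constructor
            · simp only [List.length_set]
              omega
            · intro j hj
              simp only [List.length_set] at hj
              rw [getD_set_eq (by omega), getD_set_eq (by omega : j < S.length)]
              rcases eq_or_ne p j with rfl | hpj
              · rw [if_pos rfl]
                split_ifs with hkj
                · exact hxk
                · -- k ≠ p; show p < k
                  have hpk : p < k := by
                    rcases lt_or_gt_of_ne (Ne.symm hkj) with h | h
                    · exact h
                    · exfalso
                      have := hjp k h
                      have h2 := hSR.2 k (by omega : k < S.length)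
                      omega
                  have := hjx p hpk
                  omega
              · rw [if_neg hpj]
                split_ifs with hkj
                · subst hkj
                  have h2 := hSR.2 k hj
                  omega
                · exact hSR.2 j hj


/-! ### Highest-weight tableaux: reading word, counts, ballotness -/

theorem highestTab_append (L : List ℕ) (l a : ℕ) :
    highestTab (L ++ [l]) a = highestTab L a ++ [List.replicate l (a + L.length)] := by
  simp [highestTab, List.mapIdx_append]

theorem rword_append_singleton (T : List (List ℕ)) (row : List ℕ) :
    rword (T ++ [row]) = row ++ rword T := by
  simp [rword]

theorem mem_rword_highestTab {L : List ℕ} {a x : ℕ} (hx : x ∈ rword (highestTab L a)) :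
    ∃ t < L.length, x = a + t := by
  simp only [rword, List.mem_flatten, List.mem_reverse] at hx
  obtain ⟨row, hrow, hxrow⟩ := hx
  obtain ⟨i, hi0, hrow⟩ := List.mem_iff_getElem.mp hrow
  have hi : i < L.length := by simpa [highestTab] using hi0
  have hrepl : row = List.replicate (L[i]'hi) (a + i) := by
    rw [← hrow]
    simp [highestTab, List.getElem_mapIdx]
  rw [hrepl] at hxrow
  exact ⟨i, hi, List.eq_of_mem_replicate hxrow⟩

theorem count_rword_highestTab (L : List ℕ) (a t : ℕ) :
    List.count (a + t) (rword (highestTab L a)) = L.getD t 0 := by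
  induction L using List.reverseRecOn with
  | nil => simp [highestTab, rword]
  | append_singleton L l ih =>
    rw [highestTab_append, rword_append_singleton, List.count_append, ih,
      List.count_replicate]
    rcases lt_trichotomy t L.length with h | h | h
    · rw [List.getD_append _ _ _ _ h, if_neg (by simp; omega)]
      omega
    · subst h
      rw [List.getD_eq_default L _ (le_refl _),
        List.getD_append_right _ _ _ _ (le_refl _), if_pos (by simp)]
      simp
    · rw [List.getD_eq_default L _ (by omega),
        List.getD_eq_default (L ++ [l]) _ (by simp; omega), if_neg (by simp; omega)]

theorem suffix_replicate {t : List ℕ} {n c : ℕ} (h : t <:+ List.replicate n c) :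
    t = List.replicate t.length c :=
  List.eq_replicate_of_mem fun x hx =>
    List.eq_of_mem_replicate (h.sublist.subset hx)

theorem ballot_rword_highestTab {a i : ℕ} (hi : a ≤ i) :
    ∀ (L : List ℕ), L.Pairwise (fun x y => y ≤ x) →
      Ballot i (rword (highestTab L a)) := by
  intro L
  induction L using List.reverseRecOn with
  | nil =>
    intro _ s hs
    rw [show rword (highestTab [] a) = [] from rfl, List.suffix_nil] at hs
    subst hs; simp
  | append_singleton L l ih =>
    intro hL
    have hL' : L.Pairwise (fun x y => y ≤ x) := (List.pairwise_append.mp hL).1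
    have hlast : ∀ x ∈ L, l ≤ x := fun x hx =>
      (List.pairwise_append.mp hL).2.2 x hx l (by simp)
    have ihL := ih hL'
    intro s hs
    rw [highestTab_append, rword_append_singleton] at hs
    rcases suffix_append_cases hs with hs | ⟨t, ht, rfl⟩
    · exact ihL s hs
    · have ht' : t = List.replicate t.length (a + L.length) := suffix_replicate ht
      have htlen : t.length ≤ l := by simpa using ht.length_le
      rw [List.count_append, List.count_append, ht', List.count_replicate,
        List.count_replicate]
      have hball := ihL (rword (highestTab L a)) (List.suffix_refl _)
      by_cases hc1 : a + L.length = i + 1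
      · have hLne : 0 < L.length := by omega
        have h1 : List.count (i + 1) (rword (highestTab L a)) = 0 := by
          rw [List.count_eq_zero]
          intro hmem
          obtain ⟨t', ht', heq⟩ := mem_rword_highestTab hmem
          omega
        have h2 : List.count i (rword (highestTab L a)) = L.getD (L.length - 1) 0 := by
          have heqi : i = a + (L.length - 1) := by omega
          rw [heqi, count_rword_highestTab]
        have h3 : l ≤ L.getD (L.length - 1) 0 := hlast _ (getD_mem (by omega))
        rw [if_pos (by simpa using hc1), if_neg (by simp; omega)]
        omega
      · rw [if_neg (by simp; omega)]
        by_cases hc2 : a + L.length = i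
        · rw [if_pos (by simpa using hc2)]
          omega
        · rw [if_neg (by simp; omega)]
          omega

/-! ### SSYT with ballot reading word is highest -/

theorem ssyt_ballot_rows_const {T : List (List ℕ)} (hT : IsSSYT T) {a : ℕ}
    (hmin : ∀ row ∈ T, ∀ x ∈ row, a ≤ x)
    (hball : ∀ i, a ≤ i → Ballot i (rword T)) :
    ∀ t (ht : t < T.length) (j : ℕ) (hj : j < T[t].length), T[t][j] = a + t := by
  intro t
  induction t using Nat.strong_induction_on with
  | _ t IH =>
  intro ht j hj
  -- lower bound: a + t ≤ T[t][j]
  have hlow : ∀ (j' : ℕ) (hj' : j' < T[t].length), a + t ≤ T[t][j'] := by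
    intro j' hj'
    rcases t with _ | s
    · exact hmin T[0] (List.getElem_mem ht) _ (List.getElem_mem hj')
    · have hrel := List.isChain_iff_getElem.mp hT.2.2 s (by omega)
      have hlen : T[s + 1].length ≤ T[s].length := hrel.1
      have hcol := hrel.2 j' hj'
      rw [List.getD_eq_getElem _ _ (by omega), List.getD_eq_getElem _ _ hj'] at hcol
      have hprev := IH s (by omega) (by omega) j' (by omega)
      omega
  -- upper bound via ballot
  by_contra hne
  have hu : a + t < T[t][j] := lt_of_le_of_ne (hlow j hj) (Ne.symm hne)
  set u := T[t][j] with hudef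
  -- the suffix starting at cell (t, j)
  have hrwapp : ∀ (A B : List (List ℕ)), rword (A ++ B) = rword B ++ rword A := by
    intro A B; simp [rword]
  have hsuf : (T[t].drop j ++ rword (T.take t)) <:+ rword T := by
    have h1 : rword T = rword (T.drop (t + 1)) ++ rword (T.take (t + 1)) := by
      conv_lhs => rw [← List.take_append_drop (t + 1) T]
      rw [hrwapp]
    have h2 : rword (T.take (t + 1)) = T[t] ++ rword (T.take t) := by
      have : T.take (t + 1) = T.take t ++ [T[t]] := by
        rw [List.take_succ, List.getElem?_eq_getElem ht]
        rfl
      rw [this, rword_append_singleton]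
    refine ⟨rword (T.drop (t + 1)) ++ T[t].take j, ?_⟩
    rw [h1, h2]
    simp only [List.append_assoc]
    congr 1
    rw [← List.append_assoc, List.take_append_drop]
  have hsorted : T[t].Pairwise (· ≤ ·) :=
    List.isChain_iff_pairwise.mp (hT.2.1 T[t] (List.getElem_mem ht))
  have hcount1 : 0 < List.count u (T[t].drop j ++ rword (T.take t)) := by
    rw [List.count_pos_iff]
    apply List.mem_append_left
    have h0 : 0 < (T[t].drop j).length := by simp; omega
    have hv : (T[t].drop j)[0]'h0 = u := by
      rw [List.getElem_drop]
      simp [hudef]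
    rw [← hv]
    exact List.getElem_mem h0
  have hcount0 : List.count (u - 1) (T[t].drop j ++ rword (T.take t)) = 0 := by
    rw [List.count_eq_zero]
    intro hmem
    rcases List.mem_append.mp hmem with hmem | hmem
    · obtain ⟨j', hj', heq⟩ := List.mem_iff_getElem.mp hmem
      have hjlen : j + j' < T[t].length := by
        have h2 := hj'
        rw [List.length_drop] at h2
        omega
      have heq2 : T[t][j + j']'hjlen = u - 1 := by
        rw [← heq, List.getElem_drop]
      have hge : T[t][j]'hj ≤ T[t][j + j']'hjlen := by
        rcases Nat.eq_zero_or_pos j' with rfl | hpos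
        · simp
        · exact List.pairwise_iff_getElem.mp hsorted j (j + j') hj hjlen (by omega)
      rw [heq2, ← hudef] at hge
      omega
    · simp only [rword, List.mem_flatten, List.mem_reverse] at hmem
      obtain ⟨row, hrow, hmemrow⟩ := hmem
      obtain ⟨t', ht'0, heqrow⟩ := List.mem_iff_getElem.mp hrow
      have ht'len : t' < t := by
        have := ht'0
        rw [List.length_take] at this
        omega
      have ht'T : t' < T.length := by omega
      have heqrow2 : T[t']'ht'T = row := by rw [← heqrow, List.getElem_take]
      subst heqrow2
      obtain ⟨j', hj', heqx⟩ := List.mem_iff_getElem.mp hmemrow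
      have hval := IH t' ht'len ht'T j' hj'
      omega
  have hb := hball (u - 1) (by omega) _ hsuf
  have : u - 1 + 1 = u := by omega
  rw [this] at hb
  omega

/-- An SSYT with entries `≥ a` whose reading word is ballot is the highest tableau
of its shape. -/
theorem ssyt_ballot_eq_highest {T : List (List ℕ)} (hT : IsSSYT T) {a : ℕ}
    (hmin : ∀ row ∈ T, ∀ x ∈ row, a ≤ x)
    (hball : ∀ i, a ≤ i → Ballot i (rword T)) :
    T = highestTab (shape T) a := by
  have hconst := ssyt_ballot_rows_const hT hmin hball
  apply List.ext_getElem
  · simp [highestTab, shape]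
  · intro t h1 h2
    have hrhs : (highestTab (shape T) a)[t]'h2 = List.replicate (T[t].length) (a + t) := by
      simp [highestTab, List.getElem_mapIdx, shape]
    rw [hrhs]
    apply List.ext_getElem
    · simp
    · intro j hj1 hj2
      rw [List.getElem_replicate]
      exact hconst t h1 j hj1

theorem isSSYT_nil : IsSSYT [] := ⟨by simp, by simp, by simp [List.Chain']⟩

theorem tabOf_isSSYT (w : List ℕ) : IsSSYT (tabOf w) := by
  induction w using List.reverseRecOn with
  | nil => exact isSSYT_nil
  | append_singleton u x ih =>
    have : tabOf (u ++ [x]) = insertTab (tabOf u) x := by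
      simp [tabOf, List.foldl_append]
    rw [this]
    exact insertTab_isSSYT _ _ ih

theorem eq_of_getD_pos {L1 L2 : List ℕ} (h : ∀ t, L1.getD t 0 = L2.getD t 0)
    (h1 : ∀ x ∈ L1, 0 < x) (h2 : ∀ x ∈ L2, 0 < x) : L1 = L2 := by
  have hlen : L1.length = L2.length := by
    by_contra hne
    rcases Nat.lt_or_ge L1.length L2.length with hlt | hge
    · have := h L1.length
      rw [List.getD_eq_default _ _ (le_refl _)] at this
      have hpos := h2 (L2.getD L1.length 0) (getD_mem hlt)
      omega
    · have hgt : L2.length < L1.length := by omega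
      have := h L2.length
      rw [List.getD_eq_default L2 _ (le_refl _)] at this
      have hpos := h1 (L1.getD L2.length 0) (getD_mem hgt)
      omega
  apply List.ext_getElem hlen
  intro n hn1 hn2
  have := h n
  rwa [List.getD_eq_getElem _ _ hn1, List.getD_eq_getElem _ _ hn2] at this

/-! ### The main characterization: insertion tableau is highest iff ballot -/

theorem tabOf_eq_highest_iff {a : ℕ} {w : List ℕ} (hw : ∀ x ∈ w, a ≤ x)
    {L : List ℕ} (hL : L.Pairwise (fun x y => y ≤ x)) (hLpos : ∀ x ∈ L, 0 < x) :
    tabOf w = highestTab L a ↔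
      ((∀ i, a ≤ i → Ballot i w) ∧ ∀ t, List.count (a + t) w = L.getD t 0) := by
  have hknuth := tabOf_knuth w
  constructor
  · intro heq
    rw [heq] at hknuth
    constructor
    · intro i hi
      exact (Ballot.kequiv hknuth).mpr (ballot_rword_highestTab hi L hL)
    · intro t
      rw [hknuth.count_eq (a + t), count_rword_highestTab]
  · rintro ⟨hball, hcount⟩
    set T := tabOf w with hT
    have hssyt : IsSSYT T := tabOf_isSSYT w
    have hminT : ∀ row ∈ T, ∀ x ∈ row, a ≤ x := by
      intro row hrow x hx
      have hxmem : x ∈ rword T := by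
        simp only [rword, List.mem_flatten, List.mem_reverse]
        exact ⟨row, hrow, hx⟩
      have : 0 < List.count x w := by
        rw [hknuth.count_eq x]
        exact List.count_pos_iff.mpr hxmem
      exact hw x (List.count_pos_iff.mp this)
    have hballT : ∀ i, a ≤ i → Ballot i (rword T) := fun i hi =>
      (Ballot.kequiv hknuth).mp (hball i hi)
    have heq := ssyt_ballot_eq_highest hssyt hminT hballT
    have hshape : shape T = L := by
      apply eq_of_getD_pos
      · intro t
        have c1 : List.count (a + t) (rword T) = (shape T).getD t 0 := by
          conv_lhs => rw [heq]
          rw [count_rword_highestTab]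
        rw [← c1, ← hknuth.count_eq (a + t), hcount t]
      · intro x hx
        obtain ⟨row, hrow, rfl⟩ := List.mem_map.mp hx
        have := hssyt.1 row hrow
        simpa [List.length_pos_iff] using this
      · exact hLpos
    rw [← hshape]
    exact heq


/-! ### Ballot and counts through filtering -/

theorem exists_suffix_filter (p : ℕ → Bool) :
    ∀ (w s : List ℕ), s <:+ w.filter p → ∃ t, t <:+ w ∧ t.filter p = s
  | [], s, hs => by
    rw [List.filter_nil, List.suffix_nil] at hs
    exact ⟨[], List.suffix_refl _, by simp [hs]⟩
  | a :: w, s, hs => by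
    by_cases hpa : p a
    · rw [List.filter_cons_of_pos hpa] at hs
      rcases List.suffix_cons_iff.mp hs with rfl | hs
      · exact ⟨a :: w, List.suffix_refl _, by rw [List.filter_cons_of_pos hpa]⟩
      · obtain ⟨t, ht, rfl⟩ := exists_suffix_filter p w s hs
        exact ⟨t, ht.trans (List.suffix_cons a w), rfl⟩
    · rw [List.filter_cons_of_neg (by simpa using hpa)] at hs
      obtain ⟨t, ht, rfl⟩ := exists_suffix_filter p w s hs
      exact ⟨t, ht.trans (List.suffix_cons a w), rfl⟩

theorem ballot_filter_iff {p : ℕ → Bool} {i : ℕ} (hpi : p i = true) (hpi1 : p (i + 1) = true)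
    (w : List ℕ) : Ballot i (w.filter p) ↔ Ballot i w := by
  constructor
  · intro hb s hs
    have := hb (s.filter p) (hs.filter p)
    rwa [List.count_filter hpi, List.count_filter hpi1] at this
  · intro hb s hs
    obtain ⟨t, ht, rfl⟩ := exists_suffix_filter p w s hs
    rw [List.count_filter hpi, List.count_filter hpi1]
    exact hb t ht

/-! ### Row words of matrices -/

def colPart {m n : ℕ} (M : Matrix (Fin m) (Fin n) ℕ) (l : List (Fin m)) (j : Fin n) :
    List ℕ :=
  l.flatMap fun i => List.replicate (M i j) ((i : ℕ) + 1)

theorem rowWord_eq {m n : ℕ} (M : Matrix (Fin m) (Fin n) ℕ) :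
    rowWord M = (List.finRange n).flatMap fun j => colPart M (List.finRange m) j := rfl

theorem colWord_eq_transpose {m n : ℕ} (M : Matrix (Fin m) (Fin n) ℕ) :
    colWord M = rowWord M.transpose := rfl

section MatrixWords

variable {m n : ℕ} (M : Matrix (Fin m) (Fin n) ℕ)

theorem count_colPart (l : List (Fin m)) (j : Fin n) (c : ℕ) :
    List.count c (colPart M l j) =
      (l.map fun (i : Fin m) => if (i : ℕ) + 1 = c then M i j else 0).sum := by
  induction l with
  | nil => simp [colPart]
  | cons i l ih =>
    have hstep : colPart M (i :: l) j =
        List.replicate (M i j) ((i : ℕ) + 1) ++ colPart M l j := rfl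
    rw [hstep, List.count_append, List.count_replicate, ih, List.map_cons, List.sum_cons]
    simp [beq_iff_eq]

theorem count_colPart_full (j : Fin n) (i0 : Fin m) :
    List.count ((i0 : ℕ) + 1) (colPart M (List.finRange m) j) = M i0 j := by
  rw [count_colPart]
  have hcongr : ∀ i : Fin m,
      (if (i : ℕ) + 1 = (i0 : ℕ) + 1 then M i j else 0) = (if i = i0 then M i j else 0) := by
    intro i
    by_cases h : i = i0
    · subst h; simp
    · rw [if_neg (fun hc => h (Fin.ext (by omega))), if_neg h]
  calc (List.map (fun (i : Fin m) => if (i : ℕ) + 1 = (i0 : ℕ) + 1 then M i j else 0)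
        (List.finRange m)).sum
      = (List.map (fun (i : Fin m) => if i = i0 then M i j else 0) (List.finRange m)).sum := by
        congr 1
        exact List.map_congr_left fun i _ => hcongr i
    _ = ∑ i : Fin m, if i = i0 then M i j else 0 := (Fin.sum_univ_def _).symm
    _ = M i0 j := by rw [Finset.sum_ite_eq' Finset.univ i0]; simp

theorem mem_colPart {l : List (Fin m)} {j : Fin n} {x : ℕ} (hx : x ∈ colPart M l j) :
    ∃ i ∈ l, x = (i : ℕ) + 1 := by
  simp only [colPart, List.mem_flatMap, List.mem_replicate] at hx
  obtain ⟨i, hi, _, rfl⟩ := hx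
  exact ⟨i, hi, rfl⟩

theorem mem_take_finRange_s15 {d : ℕ} {i : Fin m} (h : i ∈ (List.finRange m).take d) :
    (i : ℕ) < d := by
  obtain ⟨k, hk, heq⟩ := List.mem_iff_getElem.mp h
  have hk' : k < d := by
    rw [List.length_take, List.length_finRange] at hk
    omega
  rw [List.getElem_take, List.getElem_finRange] at heq
  have := congrArg Fin.val heq
  simp at this
  omega

theorem mem_drop_finRange_s15 {d : ℕ} {i : Fin m} (h : i ∈ (List.finRange m).drop d) :
    d ≤ (i : ℕ) := by
  obtain ⟨k, hk, heq⟩ := List.mem_iff_getElem.mp h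
  rw [List.getElem_drop, List.getElem_finRange] at heq
  have := congrArg Fin.val heq
  simp at this
  omega

theorem count_flatMap_cols (J : List (Fin n)) (i0 : Fin m) :
    List.count ((i0 : ℕ) + 1) (J.flatMap fun j => colPart M (List.finRange m) j) =
      (J.map fun j => M i0 j).sum := by
  induction J with
  | nil => simp
  | cons j J ih =>
    rw [List.flatMap_cons, List.count_append, ih, count_colPart_full]
    simp

theorem count_rowWord (i0 : Fin m) :
    List.count ((i0 : ℕ) + 1) (rowWord M) = ((List.finRange n).map fun j => M i0 j).sum := by
  rw [rowWord_eq, count_flatMap_cols]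

theorem mem_rowWord_s15 {x : ℕ} (hx : x ∈ rowWord M) : ∃ i : Fin m, x = (i : ℕ) + 1 := by
  rw [rowWord_eq] at hx
  simp only [List.mem_flatMap] at hx
  obtain ⟨j, _, hx⟩ := hx
  obtain ⟨i, _, rfl⟩ := mem_colPart M hx
  exact ⟨i, rfl⟩

/-- The matrix-level highest-weight condition for rows `r0, r1 = r0+1`. -/
def RowCond (r0 r1 : Fin m) : Prop :=
  ∀ j : Fin n,
    M r1 j + (((List.finRange n).drop ((j : ℕ) + 1)).map fun k => M r1 k).sum ≤
      (((List.finRange n).drop ((j : ℕ) + 1)).map fun k => M r0 k).sum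

theorem ballot_W_of_cond {r0 r1 : Fin m} (hr : (r1 : ℕ) = (r0 : ℕ) + 1)
    (hcond : RowCond M r0 r1) :
    ∀ (J : List (Fin n)), J <:+ List.finRange n →
      Ballot ((r0 : ℕ) + 1) (J.flatMap fun j => colPart M (List.finRange m) j)
  | [], _ => by
    intro s hs
    rw [List.flatMap_nil, List.suffix_nil] at hs
    simp [hs]
  | j :: J', hsuf => by
    have hJ' : J' <:+ List.finRange n := (List.suffix_cons j J').trans hsuf
    have hJ'eq : J' = (List.finRange n).drop ((j : ℕ) + 1) := by
      obtain ⟨t, ht⟩ := hsuf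
      have hlen : t.length < (List.finRange n).length := by
        rw [← ht]
        simp
      have hdrop : (List.finRange n).drop t.length = j :: J' := by
        rw [← ht, List.drop_left]
      have hjval : (j : ℕ) = t.length := by
        have h1 : ((List.finRange n).drop t.length)[0]? = some j := by
          rw [hdrop]; simp
        rw [List.getElem?_drop] at h1
        rw [List.getElem?_eq_getElem (by simpa using hlen)] at h1
        have h2 := Option.some.inj h1
        rw [List.getElem_finRange] at h2
        have h3 := congrArg Fin.val h2
        simpa using h3.symm
      have hassoc : (t ++ [j]) ++ J' = List.finRange n := by rw [← ht]; simp
      conv_rhs => rw [← hassoc]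
      rw [show (j : ℕ) + 1 = (t ++ [j]).length by simp [hjval], List.drop_left]
    intro s hs
    rw [List.flatMap_cons] at hs
    rcases suffix_append_cases hs with hs | ⟨s₀, hs₀, rfl⟩
    · exact ballot_W_of_cond hr hcond J' hJ' s hs
    · have h1 : List.count ((r0 : ℕ) + 1 + 1) s₀ ≤ M r1 j := by
        have hle := hs₀.sublist.count_le ((r0 : ℕ) + 1 + 1)
        have h2 := count_colPart_full M j r1
        rw [hr] at h2
        omega
      have h2 : List.count ((r0 : ℕ) + 1 + 1)
          (J'.flatMap fun k => colPart M (List.finRange m) k) =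
          (J'.map fun k => M r1 k).sum := by
        have := count_flatMap_cols M J' r1
        rw [hr] at this
        exact this
      have h3 : List.count ((r0 : ℕ) + 1)
          (J'.flatMap fun k => colPart M (List.finRange m) k) =
          (J'.map fun k => M r0 k).sum := count_flatMap_cols M J' r0
      have hcnd := hcond j
      rw [← hJ'eq] at hcnd
      rw [List.count_append, List.count_append, h2, h3]
      omega

theorem cond_of_ballot_rowWord {r0 r1 : Fin m} (hr : (r1 : ℕ) = (r0 : ℕ) + 1)
    (hb : Ballot ((r0 : ℕ) + 1) (rowWord M)) : RowCond M r0 r1 := by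
  intro j
  set B := colPart M ((List.finRange m).drop ((r0 : ℕ) + 1)) j with hB
  set W' := ((List.finRange n).drop ((j : ℕ) + 1)).flatMap
    (fun k => colPart M (List.finRange m) k) with hW'
  -- the relevant suffix of the row word
  have hsplit1 : List.finRange n =
      (List.finRange n).take (j : ℕ) ++ j :: (List.finRange n).drop ((j : ℕ) + 1) := by
    conv_lhs => rw [← List.take_append_drop (j : ℕ) (List.finRange n)]
    congr 1
    have hjlt : (j : ℕ) < (List.finRange n).length := by simp
    rw [← List.getElem_cons_drop hjlt]
    congr 1
    rw [List.getElem_finRange]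
    exact Fin.ext (by simp)
  have hsplit2 : colPart M (List.finRange m) j =
      colPart M ((List.finRange m).take ((r0 : ℕ) + 1)) j ++ B := by
    rw [hB, colPart, colPart, colPart, ← List.flatMap_append, List.take_append_drop]
  have hsuffix : (B ++ W') <:+ rowWord M := by
    refine ⟨((List.finRange n).take (j : ℕ)).flatMap (fun k => colPart M (List.finRange m) k)
      ++ colPart M ((List.finRange m).take ((r0 : ℕ) + 1)) j, ?_⟩
    rw [rowWord_eq]
    conv_rhs => rw [hsplit1]
    rw [List.flatMap_append, List.flatMap_cons, hsplit2]
    simp [List.append_assoc, hW']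
  have hBtop : List.count ((r0 : ℕ) + 1 + 1) B = M r1 j := by
    have hfull := count_colPart_full M j r1
    rw [hsplit2, List.count_append] at hfull
    have htake : List.count ((r1 : ℕ) + 1)
        (colPart M ((List.finRange m).take ((r0 : ℕ) + 1)) j) = 0 := by
      rw [List.count_eq_zero]
      intro hmem
      obtain ⟨i, hi, heq⟩ := mem_colPart M hmem
      have := mem_take_finRange_s15 hi
      omega
    rw [htake] at hfull
    rw [← hr] at *
    omega
  have hBbot : List.count ((r0 : ℕ) + 1) B = 0 := by
    rw [List.count_eq_zero]
    intro hmem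
    obtain ⟨i, hi, heq⟩ := mem_colPart M hmem
    have := mem_drop_finRange_s15 hi
    omega
  have hW1 : List.count ((r0 : ℕ) + 1 + 1) W' =
      (((List.finRange n).drop ((j : ℕ) + 1)).map fun k => M r1 k).sum := by
    have := count_flatMap_cols M ((List.finRange n).drop ((j : ℕ) + 1)) r1
    rw [hr] at this
    exact this
  have hW0 : List.count ((r0 : ℕ) + 1) W' =
      (((List.finRange n).drop ((j : ℕ) + 1)).map fun k => M r0 k).sum :=
    count_flatMap_cols M ((List.finRange n).drop ((j : ℕ) + 1)) r0
  have := hb (B ++ W') hsuffix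
  rw [List.count_append, List.count_append, hBtop, hBbot, hW1, hW0] at this
  omega

theorem ballot_rowWord_iff {r0 r1 : Fin m} (hr : (r1 : ℕ) = (r0 : ℕ) + 1) :
    Ballot ((r0 : ℕ) + 1) (rowWord M) ↔ RowCond M r0 r1 := by
  constructor
  · exact cond_of_ballot_rowWord M hr
  · intro hcond
    rw [rowWord_eq]
    exact ballot_W_of_cond M hr hcond (List.finRange n) (List.suffix_refl _)

end MatrixWords


/-! ### Sum conversions, `ent`, filtrations, block shapes -/

theorem ent_apply {m n : ℕ} (M : Matrix (Fin m) (Fin n) ℕ) (i : Fin m) (j : Fin n) :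
    ent M ((i : ℕ) + 1) ((j : ℕ) + 1) = M i j := by
  have hi := i.isLt
  have hj := j.isLt
  unfold ent
  rw [dif_pos (by omega)]
  congr 1

theorem ent_transpose {m n : ℕ} (M : Matrix (Fin m) (Fin n) ℕ) (i j : ℕ) :
    ent M.transpose i j = ent M j i := by
  unfold ent
  by_cases h : 1 ≤ i ∧ i ≤ n ∧ 1 ≤ j ∧ j ≤ m
  · rw [dif_pos h, dif_pos (by tauto)]
    rfl
  · rw [dif_neg h, dif_neg (by tauto)]

theorem sum_drop_finRange_eq {n : ℕ} (f : Fin n → ℕ) (F : ℕ → ℕ)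
    (hF : ∀ (k : ℕ) (h : k < n), f ⟨k, h⟩ = F (k + 1)) (d : ℕ) :
    (((List.finRange n).drop d).map f).sum = ∑ k ∈ Finset.Icc (d + 1) n, F k := by
  have main : ∀ (fuel d : ℕ), n - d = fuel →
      (((List.finRange n).drop d).map f).sum = ∑ k ∈ Finset.Icc (d + 1) n, F k := by
    intro fuel
    induction fuel with
    | zero =>
      intro d hd
      have h1 : (List.finRange n).drop d = [] := by
        rw [List.drop_eq_nil_iff]
        simp
        omega
      rw [h1, Finset.Icc_eq_empty (by omega)]
      simp
    | succ fuel ih =>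
      intro d hd
      have hdn : d < n := by omega
      have hdlen : d < (List.finRange n).length := by simpa using hdn
      have hsplit : (List.finRange n).drop d =
          (List.finRange n)[d] :: (List.finRange n).drop (d + 1) :=
        (List.getElem_cons_drop hdlen).symm
      rw [hsplit, List.map_cons, List.sum_cons, ih (d + 1) (by omega)]
      have hval : f ((List.finRange n)[d]'hdlen) = F (d + 1) := by
        rw [List.getElem_finRange, ← hF d hdn]
        congr 1
      rw [hval]
      have hicc : Finset.Icc (d + 1) n = insert (d + 1) (Finset.Icc (d + 2) n) := by
        ext q
        simp only [Finset.mem_Icc, Finset.mem_insert]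
        omega
      rw [hicc, Finset.sum_insert (by simp [Finset.mem_Icc])]
  exact main (n - d) d rfl

theorem sum_Icc_shift (F : ℕ → ℕ) (a b : ℕ) :
    ∑ k ∈ Finset.Icc a b, F (k + 1) = ∑ k ∈ Finset.Icc (a + 1) (b + 1), F k := by
  rw [← Finset.map_add_right_Icc a b 1, Finset.sum_map]
  rfl

theorem count_rowWord_icc {m n : ℕ} (M : Matrix (Fin m) (Fin n) ℕ) (i0 : Fin m) :
    List.count ((i0 : ℕ) + 1) (rowWord M) = ∑ k ∈ Finset.Icc 1 n, ent M ((i0 : ℕ) + 1) k := by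
  rw [count_rowWord]
  have := sum_drop_finRange_eq (fun j => M i0 j) (fun k => ent M ((i0 : ℕ) + 1) k)
    (fun k h => (ent_apply M i0 ⟨k, h⟩).symm) 0
  simpa using this

/-- Translation of `RowCond` into interval sums of 1-based entries. -/
theorem rowCond_iff_icc {m n : ℕ} (M : Matrix (Fin m) (Fin n) ℕ) {i : ℕ}
    (hi1 : 1 ≤ i) (him : i < m) :
    RowCond M ⟨i - 1, by omega⟩ ⟨i, him⟩ ↔
      ∀ j, 1 ≤ j → j ≤ n →
        ∑ k ∈ Finset.Icc j n, ent M (i + 1) k ≤ ∑ k ∈ Finset.Icc j n, ent M i (k + 1) := by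
  have key : ∀ (j0 : Fin n),
      (M ⟨i, him⟩ j0 +
        (((List.finRange n).drop ((j0 : ℕ) + 1)).map fun k => M ⟨i, him⟩ k).sum ≤
        (((List.finRange n).drop ((j0 : ℕ) + 1)).map fun k => M ⟨i - 1, by omega⟩ k).sum) ↔
      (∑ k ∈ Finset.Icc ((j0 : ℕ) + 1) n, ent M (i + 1) k ≤
        ∑ k ∈ Finset.Icc ((j0 : ℕ) + 1) n, ent M i (k + 1)) := by
    intro j0
    have hj0 := j0.isLt
    have e1 : (((List.finRange n).drop ((j0 : ℕ) + 1)).map fun k => M ⟨i, him⟩ k).sum =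
        ∑ k ∈ Finset.Icc ((j0 : ℕ) + 1 + 1) n, ent M (i + 1) k :=
      sum_drop_finRange_eq (fun k => M ⟨i, him⟩ k) (fun k => ent M (i + 1) k)
        (fun k h => by simpa using (ent_apply M ⟨i, him⟩ ⟨k, h⟩).symm) ((j0 : ℕ) + 1)
    have e2 : (((List.finRange n).drop ((j0 : ℕ) + 1)).map fun k => M ⟨i - 1, by omega⟩ k).sum =
        ∑ k ∈ Finset.Icc ((j0 : ℕ) + 1 + 1) n, ent M i k :=
      sum_drop_finRange_eq (fun k => M ⟨i - 1, by omega⟩ k) (fun k => ent M i k)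
        (fun k h => by
          have h2 := ent_apply M ⟨i - 1, by omega⟩ ⟨k, h⟩
          simp only [show i - 1 + 1 = i by omega] at h2
          simpa using h2.symm) ((j0 : ℕ) + 1)
    have e3 : M ⟨i, him⟩ j0 = ent M (i + 1) ((j0 : ℕ) + 1) := by
      have := ent_apply M ⟨i, him⟩ j0
      simpa using this.symm
    have e4 : ∑ k ∈ Finset.Icc ((j0 : ℕ) + 1) n, ent M (i + 1) k =
        ent M (i + 1) ((j0 : ℕ) + 1) + ∑ k ∈ Finset.Icc ((j0 : ℕ) + 1 + 1) n, ent M (i + 1) k := by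
      have hicc : Finset.Icc ((j0 : ℕ) + 1) n =
          insert ((j0 : ℕ) + 1) (Finset.Icc ((j0 : ℕ) + 1 + 1) n) := by
        ext q
        simp only [Finset.mem_Icc, Finset.mem_insert]
        omega
      rw [hicc, Finset.sum_insert (by simp [Finset.mem_Icc])]
    have e5 : ∑ k ∈ Finset.Icc ((j0 : ℕ) + 1) n, ent M i (k + 1) =
        ∑ k ∈ Finset.Icc ((j0 : ℕ) + 1 + 1) n, ent M i k := by
      rw [sum_Icc_shift]
      have hlast : ent M i (n + 1) = 0 := by
        unfold ent
        rw [dif_neg (by omega)]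
      rw [Finset.sum_Icc_succ_top (by omega), hlast]
      simp
    rw [e1, e2, e3, e4, e5]
  constructor
  · intro hc j h1 h2
    have := (key ⟨j - 1, by omega⟩).mp (hc ⟨j - 1, by omega⟩)
    simpa [show j - 1 + 1 = j by omega] using this
  · intro hc j0
    exact (key j0).mpr (hc ((j0 : ℕ) + 1) (by omega) (by have := j0.isLt; omega))

/-! ### Filtration structure -/

section Filtration

variable {m r : ℕ} {ι : Fin (r + 1) → ℕ}

theorem filtration_succ_le (hι : IsFiltration m ι) (k : Fin r) : ι k.succ ≤ m := by
  rw [← hι.2.2]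
  exact hι.1.monotone (Fin.le_last _)

theorem filtration_lt (hι : IsFiltration m ι) (k : Fin r) : ι k.castSucc < ι k.succ :=
  hι.1 (Fin.castSucc_lt_succ (i := k))

theorem filtration_cover (hι : IsFiltration m ι) {i : ℕ} (h1 : 1 ≤ i) (h2 : i ≤ m) :
    ∃ k : Fin r, ι k.castSucc < i ∧ i ≤ ι k.succ := by
  have hr : 0 < r := by
    rcases Nat.eq_zero_or_pos r with rfl | h
    · exfalso
      have h0 : ι 0 = 0 := hι.2.1
      have hlast : ι (Fin.last 0) = m := hι.2.2
      have he : (Fin.last 0) = (0 : Fin 1) := rfl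
      rw [he, h0] at hlast
      omega
    · exact h
  classical
  set S : Finset (Fin (r + 1)) := Finset.univ.filter (fun q => ι q < i) with hS
  have h0S : (0 : Fin (r + 1)) ∈ S := by
    simp [hS, hι.2.1]
    omega
  have hSne : S.Nonempty := ⟨0, h0S⟩
  set k0 := S.max' hSne with hk0
  have hk0S : k0 ∈ S := S.max'_mem hSne
  have hk0lt : ι k0 < i := by
    have := hk0S
    simp [hS] at this
    exact this
  have hk0last : k0 ≠ Fin.last r := by
    intro hcon
    rw [hcon, hι.2.2] at hk0lt
    omega
  have hk0r : (k0 : ℕ) < r := by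
    have := k0.isLt
    rcases Nat.lt_or_ge (k0 : ℕ) r with h | h
    · exact h
    · exact absurd (Fin.ext (by omega : (k0 : ℕ) = r)) hk0last
  refine ⟨⟨(k0 : ℕ), hk0r⟩, ?_, ?_⟩
  · have : (⟨(k0 : ℕ), hk0r⟩ : Fin r).castSucc = k0 := Fin.ext rfl
    rw [this]
    exact hk0lt
  · by_contra hcon
    push_neg at hcon
    have hmem : (⟨(k0 : ℕ), hk0r⟩ : Fin r).succ ∈ S := by
      simp [hS]
      exact hcon
    have := S.le_max' _ hmem
    rw [← hk0] at this
    have hval : (k0 : ℕ) + 1 ≤ (k0 : ℕ) := this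
    omega

theorem filtration_interior_not_range (hι : IsFiltration m ι) {k : Fin r} {i : ℕ}
    (h1 : ι k.castSucc < i) (h2 : i < ι k.succ) : i ∉ Set.range ι := by
  rintro ⟨q, rfl⟩
  have hq1 : k.castSucc < q := (hι.1.lt_iff_lt).mp h1
  have hq2 : q < k.succ := (hι.1.lt_iff_lt).mp h2
  have v1 : ((k.castSucc : Fin (r + 1)) : ℕ) = (k : ℕ) := rfl
  have v2 : ((k.succ : Fin (r + 1)) : ℕ) = (k : ℕ) + 1 := rfl
  have := hq1
  rw [Fin.lt_def] at hq1 hq2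
  omega

theorem filtration_interior (hι : IsFiltration m ι) {i : ℕ} (h1 : 1 ≤ i) (h2 : i < m) (h3 : i ∉ Set.range ι) :
    ∃ k : Fin r, ι k.castSucc < i ∧ i < ι k.succ := by
  obtain ⟨k, hk1, hk2⟩ := filtration_cover hι h1 (le_of_lt h2)
  refine ⟨k, hk1, ?_⟩
  rcases lt_or_eq_of_le hk2 with h | h
  · exact h
  · exact absurd ⟨k.succ, h.symm⟩ h3

end Filtration

/-! ### Block shapes -/

theorem getD_replicate_zero (z q : ℕ) : (List.replicate z (0 : ℕ)).getD q 0 = 0 := by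
  rcases Nat.lt_or_ge q z with h | h
  · rw [List.getD_eq_getElem _ _ (by simpa using h), List.getElem_replicate]
  · rw [List.getD_eq_default _ _ (by simpa using h)]

theorem decr_eq_filter_append :
    ∀ (G : List ℕ), G.Pairwise (fun x y => y ≤ x) →
      ∃ z, G = G.filter (fun x => decide (0 < x)) ++ List.replicate z 0
  | [], _ => ⟨0, rfl⟩
  | x :: G, hG => by
    have hG' : G.Pairwise (fun x y => y ≤ x) := (List.pairwise_cons.mp hG).2
    have hx : ∀ y ∈ G, y ≤ x := (List.pairwise_cons.mp hG).1
    rcases Nat.eq_zero_or_pos x with rfl | hpos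
    · have hall : ∀ y ∈ (0 : ℕ) :: G, y = 0 := by
        intro y hy
        rcases List.mem_cons.mp hy with rfl | hy
        · rfl
        · have := hx y hy; omega
      have hrep : (0 : ℕ) :: G = List.replicate ((0 : ℕ) :: G).length 0 :=
        List.eq_replicate_of_mem hall
      refine ⟨((0 : ℕ) :: G).length, ?_⟩
      have hfil : ((0 : ℕ) :: G).filter (fun x => decide (0 < x)) = [] := by
        rw [List.filter_eq_nil_iff]
        intro y hy
        have := hall y hy
        simp [this]
      rw [hfil, List.nil_append]
      exact hrep
    · obtain ⟨z, hz⟩ := decr_eq_filter_append G hG'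
      refine ⟨z, ?_⟩
      rw [List.filter_cons_of_pos (by simpa using hpos), List.cons_append, ← hz]

theorem getD_filter_pos_of_decr {G : List ℕ} (hG : G.Pairwise (fun x y => y ≤ x)) (t : ℕ) :
    (G.filter (fun x => decide (0 < x))).getD t 0 = G.getD t 0 := by
  obtain ⟨z, hz⟩ := decr_eq_filter_append G hG
  set F := G.filter (fun x => decide (0 < x)) with hF
  rcases Nat.lt_or_ge t F.length with h | h
  · conv_rhs => rw [hz]
    rw [List.getD_append _ _ _ _ h]
  · rw [List.getD_eq_default _ _ h]
    conv_rhs => rw [hz]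
    rw [List.getD_append_right _ _ _ _ h, getD_replicate_zero]

theorem getD_blockShape (lam : ℕ → ℕ) (lo size : ℕ)
    (hdec : ((List.range size).map fun t => lam (lo + t + 1)).Pairwise (fun x y => y ≤ x))
    (t : ℕ) :
    (blockShape lam lo size).getD t 0 = if t < size then lam (lo + t + 1) else 0 := by
  unfold blockShape
  rw [getD_filter_pos_of_decr hdec]
  split_ifs with h
  · rw [List.getD_eq_getElem _ _ (by simpa using h)]
    simp
  · rw [List.getD_eq_default _ _ (by simpa using h)]


/-! ### Per-block characterization -/

theorem ballot_of_letters_le {b i : ℕ} {w : List ℕ} (hw : ∀ x ∈ w, x ≤ b) (hi : b ≤ i) :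
    Ballot i w := by
  intro s hs
  have hz : List.count (i + 1) s = 0 := by
    rw [List.count_eq_zero]
    intro hmem
    have := hw _ (hs.sublist.subset hmem)
    omega
  omega

theorem block_tab_iff {m n r : ℕ} {ι : Fin (r + 1) → ℕ} (hι : IsFiltration m ι)
    (lam : ℕ → ℕ) (M : Matrix (Fin m) (Fin n) ℕ) (k : Fin r)
    (hdec : ∀ i, ι k.castSucc < i → i < ι k.succ → lam (i + 1) ≤ lam i) :
    tabOf (filterWord ι (rowWord M) k) = highestFromVec ι lam k ↔
      ((∀ i, ι k.castSucc < i → i < ι k.succ → Ballot i (rowWord M)) ∧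
        (∀ t, t < ι k.succ - ι k.castSucc →
          List.count (ι k.castSucc + t + 1) (rowWord M) = lam (ι k.castSucc + t + 1))) := by
  set a := ι k.castSucc with ha
  set b := ι k.succ with hb
  have hab : a < b := filtration_lt hι k
  set p : ℕ → Bool := fun x => decide (a + 1 ≤ x ∧ x ≤ b) with hp
  have hwk : filterWord ι (rowWord M) k = (rowWord M).filter p := rfl
  have hmono : ∀ u v : ℕ, a ≤ u → u ≤ v → v < b → lam (v + 1) ≤ lam (u + 1) := by
    intro u v hu huv hv
    induction v, huv using Nat.le_induction with
    | base => exact le_refl _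
    | succ v hv' ih =>
      have h1 : lam (v + 1 + 1) ≤ lam (v + 1) := hdec (v + 1) (by omega) (by omega)
      have h2 := ih (by omega)
      omega
  have hGdec : ((List.range (b - a)).map fun t => lam (a + t + 1)).Pairwise
      (fun x y => y ≤ x) := by
    rw [List.pairwise_iff_getElem]
    intro t t' h1 h2 htt
    simp only [List.length_map, List.length_range] at h1 h2
    simp only [List.getElem_map, List.getElem_range]
    exact hmono (a + t) (a + t') (by omega) (by omega) (by omega)
  have hLpos : ∀ x ∈ blockShape lam a (b - a), 0 < x := by
    intro x hx
    unfold blockShape at hx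
    have := List.of_mem_filter hx
    simpa using this
  have hL : (blockShape lam a (b - a)).Pairwise (fun x y => y ≤ x) :=
    hGdec.sublist List.filter_sublist
  have hw : ∀ x ∈ (rowWord M).filter p, a + 1 ≤ x := by
    intro x hx
    have h2 := List.of_mem_filter hx
    simp only [hp, decide_eq_true_eq] at h2
    exact h2.1
  have hiff := tabOf_eq_highest_iff (a := a + 1) hw hL hLpos
  rw [hwk]
  have hHF : highestFromVec ι lam k = highestTab (blockShape lam a (b - a)) (a + 1) := rfl
  rw [hHF, hiff]
  constructor
  · rintro ⟨hball, hcount⟩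
    constructor
    · intro i hi1 hi2
      have hb1 := hball i (by omega)
      rwa [ballot_filter_iff (by simp [hp]; omega) (by simp [hp]; omega)] at hb1
    · intro t ht
      have hc := hcount t
      rw [getD_blockShape lam a (b - a) hGdec t, if_pos ht,
        List.count_filter (by simp [hp]; omega),
        show a + 1 + t = a + t + 1 from by omega] at hc
      exact hc
  · rintro ⟨hball, hcount⟩
    constructor
    · intro i hi
      rcases Nat.lt_or_ge i b with hib | hib
      · rw [ballot_filter_iff (by simp [hp]; omega) (by simp [hp]; omega)]
        exact hball i (by omega) hib
      · refine ballot_of_letters_le ?_ hib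
        intro x hx
        have h2 := List.of_mem_filter hx
        simp only [hp, decide_eq_true_eq] at h2
        exact h2.2
    · intro t
      rw [getD_blockShape lam a (b - a) hGdec t]
      split_ifs with ht
      · rw [List.count_filter (by simp [hp]; omega),
          show a + 1 + t = a + t + 1 from by omega]
        exact hcount t ht
      · rw [List.count_eq_zero]
        intro hmem
        have h2 := List.of_mem_filter hmem
        simp only [hp, decide_eq_true_eq] at h2
        omega

/-! ### Row-side global characterization -/

theorem rowside_iff {m n r : ℕ} {ι : Fin (r + 1) → ℕ} (hι : IsFiltration m ι)
    (lam : ℕ → ℕ)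
    (hlam : ∀ i, 1 ≤ i → i < m → i ∉ Set.range ι → lam (i + 1) ≤ lam i)
    (M : Matrix (Fin m) (Fin n) ℕ) :
    (∀ k, tabOf (filterWord ι (rowWord M) k) = highestFromVec ι lam k) ↔
      ((∀ i, 1 ≤ i → i < m → i ∉ Set.range ι → ∀ j, 1 ≤ j → j ≤ n →
          ∑ k ∈ Finset.Icc j n, ent M (i + 1) k ≤ ∑ k ∈ Finset.Icc j n, ent M i (k + 1)) ∧
        (∀ i, 1 ≤ i → i ≤ m → ∑ j ∈ Finset.Icc 1 n, ent M i j = lam i)) := by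
  have hblockdec : ∀ k : Fin r, ∀ i, ι k.castSucc < i → i < ι k.succ →
      lam (i + 1) ≤ lam i := by
    intro k i h1 h2
    have hbm := filtration_succ_le hι k
    exact hlam i (by omega) (by omega) (filtration_interior_not_range hι h1 h2)
  have hballiff : ∀ i, 1 ≤ i → ∀ (h2 : i < m),
      (Ballot i (rowWord M) ↔ (∀ j, 1 ≤ j → j ≤ n →
        ∑ k ∈ Finset.Icc j n, ent M (i + 1) k ≤ ∑ k ∈ Finset.Icc j n, ent M i (k + 1))) := by
    intro i h1 h2
    have h3 := ballot_rowWord_iff M (r0 := ⟨i - 1, by omega⟩) (r1 := ⟨i, h2⟩)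
      (by simp; omega)
    have h4 : ((⟨i - 1, by omega⟩ : Fin m) : ℕ) + 1 = i := by simp; omega
    rw [h4] at h3
    rw [h3, rowCond_iff_icc M h1 h2]
  have hcounteq : ∀ i, 1 ≤ i → ∀ (h2 : i ≤ m),
      List.count i (rowWord M) = ∑ j ∈ Finset.Icc 1 n, ent M i j := by
    intro i h1 h2
    have hcw := count_rowWord_icc M ⟨i - 1, by omega⟩
    have h4 : ((⟨i - 1, by omega⟩ : Fin m) : ℕ) + 1 = i := by simp; omega
    rw [h4] at hcw
    exact hcw
  constructor
  · intro hall
    constructor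
    · intro i h1 h2 h3
      obtain ⟨k, hk1, hk2⟩ := filtration_interior hι h1 h2 h3
      have hb := ((block_tab_iff hι lam M k (hblockdec k)).mp (hall k)).1 i hk1 hk2
      exact (hballiff i h1 h2).mp hb
    · intro i h1 h2
      obtain ⟨k, hk1, hk2⟩ := filtration_cover hι h1 h2
      have hc := ((block_tab_iff hι lam M k (hblockdec k)).mp (hall k)).2
        (i - 1 - ι k.castSucc) (by omega)
      rw [show ι k.castSucc + (i - 1 - ι k.castSucc) + 1 = i from by omega] at hc
      rw [← hcounteq i h1 h2]
      exact hc
  · rintro ⟨hineq, hsum⟩ k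
    rw [block_tab_iff hι lam M k (hblockdec k)]
    have hbm := filtration_succ_le hι k
    constructor
    · intro i hk1 hk2
      have h1 : 1 ≤ i := by omega
      have h2 : i < m := by omega
      exact (hballiff i h1 h2).mpr
        (hineq i h1 h2 (filtration_interior_not_range hι hk1 hk2))
    · intro t ht
      have h1 : 1 ≤ ι k.castSucc + t + 1 := by omega
      have h2 : ι k.castSucc + t + 1 ≤ m := by omega
      rw [hcounteq _ h1 h2]
      exact hsum _ h1 h2

/-- The number of matrices mapped by `filterRSK_{I|J}` to the
highest-weight tableau-tuple `(T_λ | T_μ)` equals the number of lattice points of the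
polytope `P_{λ|μ}` cut out by the highest-weight conditions (i), (ii), the shape conditions
(iii), (iv), and nonnegativity. -/
theorem highest_weight_polytope_count (m n : ℕ) {r s : ℕ}
    (ι : Fin (r + 1) → ℕ) (κ : Fin (s + 1) → ℕ)
    (hι : IsFiltration m ι) (hκ : IsFiltration n κ)
    (lam : ℕ → ℕ) (mu : ℕ → ℕ)
    (hlam : ∀ i, 1 ≤ i → i < m → i ∉ Set.range ι → lam (i + 1) ≤ lam i)
    (hmu : ∀ j, 1 ≤ j → j < n → j ∉ Set.range κ → mu (j + 1) ≤ mu j) :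
    Set.ncard {M : Matrix (Fin m) (Fin n) ℕ |
        filterRSKt ι κ M = (highestFromVec ι lam, highestFromVec κ mu)} =
    Set.ncard {M : Matrix (Fin m) (Fin n) ℕ |
        (∀ i, 1 ≤ i → i < m → i ∉ Set.range ι → ∀ j, 1 ≤ j → j ≤ n →
          ∑ k ∈ Finset.Icc j n, ent M (i + 1) k ≤ ∑ k ∈ Finset.Icc j n, ent M i (k + 1)) ∧
        (∀ j, 1 ≤ j → j < n → j ∉ Set.range κ → ∀ i, 1 ≤ i → i ≤ m →
          ∑ k ∈ Finset.Icc i m, ent M k (j + 1) ≤ ∑ k ∈ Finset.Icc i m, ent M (k + 1) j) ∧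
        (∀ i, 1 ≤ i → i ≤ m → ∑ j ∈ Finset.Icc 1 n, ent M i j = lam i) ∧
        (∀ j, 1 ≤ j → j ≤ n → ∑ i ∈ Finset.Icc 1 m, ent M i j = mu j)} := by
  apply congrArg Set.ncard
  ext M
  simp only [Set.mem_setOf_eq]
  have hrow := rowside_iff hι lam hlam M
  have hcol := rowside_iff hκ mu hmu M.transpose
  simp only [ent_transpose] at hcol
  constructor
  · intro h
    have h1 : (fun k => tabOf (filterWord ι (rowWord M) k)) = highestFromVec ι lam :=
      congrArg Prod.fst h
    have h2 : (fun k => tabOf (filterWord κ (rowWord M.transpose) k)) = highestFromVec κ mu :=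
      congrArg Prod.snd h
    have hr := hrow.mp (fun k => congrFun h1 k)
    have hc := hcol.mp (fun k => congrFun h2 k)
    exact ⟨hr.1, hc.1, hr.2, hc.2⟩
  · rintro ⟨c1, c2, c3, c4⟩
    have hr := hrow.mpr ⟨c1, c3⟩
    have hc := hcol.mpr ⟨c2, c4⟩
    exact Prod.ext (funext fun k => hr k) (funext fun k => hc k)

end FilteredRSK
end
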